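/- arXiv:2105.12631 — 9 statements merged into one kernel-verified Lean document; each statement's English description precedes it below -/
import Mathlib

section
/- Let K be a pre-H-field whose valuation is nontrivial (O ≠ K) and which has 1-DIVP. Then the derivation of K is surjective: for every f ∈ K there exists y ∈ K with y′ = f. -/
/-- `DIVPat D r` : the ordered differential field `K` with derivation `D` has `r`-DIVP:
for every polynomial `P ∈ K[Y₀,…,Y_r]` and all `f < g` with
`P(f, f′, …, f⁽ʳ⁾) < 0 < P(g, g′, …, g⁽ʳ⁾)` there is `y` with `f < y < g` and
`P(y, y′, …, y⁽ʳ⁾) = 0`. -/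
def DIVPat {K : Type*} [Field K] [LinearOrder K] [IsStrictOrderedRing K] (D : K → K) (r : ℕ) : Prop :=
  ∀ (P : MvPolynomial (Fin (r + 1)) K) (f g : K), f < g →
    MvPolynomial.eval (fun i : Fin (r + 1) => D^[(i : ℕ)] f) P < 0 →
    0 < MvPolynomial.eval (fun i : Fin (r + 1) => D^[(i : ℕ)] g) P →
    ∃ y : K, f < y ∧ y < g ∧ MvPolynomial.eval (fun i : Fin (r + 1) => D^[(i : ℕ)] y) P = 0

/-- The maximal ideal `𝔬 = {f ∈ O : f = 0 ∨ f⁻¹ ∉ O}` of the valuation ring `O`. -/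
def mIdeal {K : Type*} [Field K] (O : Subring K) : Set K :=
  {f | f ∈ O ∧ (f = 0 ∨ f⁻¹ ∉ O)}

/-- `f ≼ g` : `f ∈ O·g`. -/
def preceq {K : Type*} [Field K] (O : Subring K) (f g : K) : Prop :=
  ∃ h ∈ O, f = h * g

/-- `f ≺ g` : `g ≠ 0` and `f/g ∈ 𝔬`. -/
def precl {K : Type*} [Field K] (O : Subring K) (f g : K) : Prop :=
  g ≠ 0 ∧ f / g ∈ mIdeal O

/-- `f ≍ g` : `f ≼ g` and `g ≼ f`. -/
def asymp {K : Type*} [Field K] (O : Subring K) (f g : K) : Prop :=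
  preceq O f g ∧ preceq O g f

/-- `K` (an ordered field), equipped with the derivation `D` and the valuation ring `O`,
is a pre-`H`-field. -/
structure IsPreHField {K : Type*} [Field K] [LinearOrder K] [IsStrictOrderedRing K] (D : K → K) (O : Subring K) : Prop where
  map_add : ∀ a b : K, D (a + b) = D a + D b
  leibniz : ∀ a b : K, D (a * b) = a * D b + b * D a
  mem_or_inv_mem : ∀ f : K, f ≠ 0 → f ∈ O ∨ f⁻¹ ∈ O
  convex : ∀ a b : K, 0 ≤ a → a ≤ b → b ∈ O → a ∈ O
  deriv_pos : ∀ f : K, (∀ g ∈ O, g < f) → 0 < D f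
  small : ∀ f g : K, f ≠ 0 → g ≠ 0 → preceq O f 1 → precl O g 1 →
    precl O (D f) (D g / g)

theorem stmt0 {K : Type*} [Field K] [LinearOrder K] [IsStrictOrderedRing K] (D : K → K) (O : Subring K)
    (hK : IsPreHField D O) (hnt : ∃ f : K, f ∉ O) (hdivp : DIVPat D 1) :
    ∀ f : K, ∃ y : K, D y = f := by
  obtain ⟨x, hx⟩ := hnt
  have hD0 : D 0 = 0 := by
    have h := hK.map_add 0 0
    rw [add_zero] at h
    linarith
  have hDneg : ∀ a : K, D (-a) = -D a := by
    intro a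
    have h := hK.map_add a (-a)
    rw [add_neg_cancel, hD0] at h
    linarith
  set t : K := |x| with ht_def
  have htO : ∀ g ∈ O, g < t := by
    intro g hg
    by_contra hgt
    push_neg at hgt
    have htmem : t ∈ O := hK.convex t g (abs_nonneg x) hgt hg
    rcases abs_cases x with ⟨h1, _⟩ | ⟨h1, _⟩
    · exact hx (by rw [← h1]; exact htmem)
    · have : -x ∈ O := by rw [← h1]; exact htmem
      exact hx (by simpa using O.neg_mem this)
  have htpos : 0 < t := htO 0 O.zero_mem
  have hDt : 0 < D t := hK.deriv_pos t htO
  -- derivatives are cofinal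
  have key : ∀ f : K, 0 < f → ∃ w : K, f < D w := by
    intro f hf
    by_contra hcon
    push_neg at hcon
    have habs : ∀ w : K, |D w| ≤ f := by
      intro w
      rw [abs_le]
      refine ⟨?_, hcon w⟩
      have h2 := hcon (-w)
      rw [hDneg] at h2
      linarith
    set h₀ : K := 2 * f * (1 + t) / D t with hh₀
    have hmul : D (h₀ * t) = h₀ * D t + t * D h₀ := hK.leibniz h₀ t
    have e1 : h₀ * D t = 2 * f * (1 + t) := by
      rw [hh₀]; field_simp
    have b1 := habs (h₀ * t)
    have b2 := habs h₀
    rw [abs_le] at b1 b2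
    have b3 : t * (-f) ≤ t * D h₀ := by
      have : -f ≤ D h₀ := b2.1
      exact mul_le_mul_of_nonneg_left this htpos.le
    nlinarith [b1.2, mul_pos hf htpos]
  have main : ∀ f : K, 0 < f → ∃ y : K, D y = f := by
    intro f hf
    obtain ⟨w, hw⟩ := key f hf
    have hw0 : w ≠ 0 := by
      rintro rfl
      rw [hD0] at hw
      linarith
    have heval : ∀ a : K, MvPolynomial.eval (fun i : Fin 2 => D^[(i : ℕ)] a)
        (MvPolynomial.X 1 - MvPolynomial.C f) = D a - f := by
      intro a; simp
    have heval' : ∀ a : K, MvPolynomial.eval (fun i : Fin 2 => D^[(i : ℕ)] a)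
        (MvPolynomial.C f - MvPolynomial.X 1) = f - D a := by
      intro a; simp
    rcases hw0.lt_or_gt with hneg | hpos
    · obtain ⟨y, _, _, hy⟩ := hdivp (MvPolynomial.C f - MvPolynomial.X 1) w 0 hneg
        (by rw [heval']; linarith) (by rw [heval', hD0]; linarith)
      rw [heval'] at hy
      exact ⟨y, by linarith⟩
    · obtain ⟨y, _, _, hy⟩ := hdivp (MvPolynomial.X 1 - MvPolynomial.C f) 0 w hpos
        (by rw [heval, hD0]; linarith) (by rw [heval]; linarith)
      rw [heval] at hy
      exact ⟨y, by linarith⟩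
  intro f
  rcases lt_trichotomy f 0 with hf | hf | hf
  · obtain ⟨y, hy⟩ := main (-f) (by linarith)
    exact ⟨-y, by rw [hDneg, hy, neg_neg]⟩
  · exact ⟨0, by rw [hD0, hf]⟩
  · exact main f hf
end

section
/- Let K be a pre-H-field whose valuation is nontrivial (O ≠ K) and which has 1-DIVP. Then the set {f† : f ∈ K, f > 0} equals the set {f† : f ∈ K, f < 0}, and this set is a subgroup of the additive group of K which is convex with respect to the ordering of K. -/
theorem stmt1 {K : Type*} [Field K] [LinearOrder K] [IsStrictOrderedRing K] (D : K → K) (O : Subring K)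
    (hK : IsPreHField D O) (hnt : ∃ f : K, f ∉ O) (hdivp : DIVPat D 1) :
    {x : K | ∃ f : K, 0 < f ∧ D f / f = x} = {x : K | ∃ f : K, f < 0 ∧ D f / f = x} ∧
    ∃ G : AddSubgroup K, (G : Set K) = {x : K | ∃ f : K, 0 < f ∧ D f / f = x} ∧
      ∀ x y : K, 0 ≤ x → x ≤ y → y ∈ G → x ∈ G := by

  classical
  -- basic derivation facts
  have hD1 : D 1 = 0 := by
    have h := hK.leibniz 1 1
    simp at h
    linarith
  have hDneg : ∀ f : K, D (-f) = -(D f) := by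
    intro f
    have h0 : D 0 = 0 := by
      have h := hK.map_add 0 0
      simp at h
      linarith
    have h := hK.map_add f (-f)
    simp [h0] at h
    linarith
  have logMul : ∀ f g : K, f ≠ 0 → g ≠ 0 → D (f * g) / (f * g) = D f / f + D g / g := by
    intro f g hf hg
    rw [hK.leibniz]
    field_simp
    ring
  have logInv : ∀ f : K, f ≠ 0 → D f⁻¹ / f⁻¹ = -(D f / f) := by
    intro f hf
    have h := hK.leibniz f f⁻¹
    rw [mul_inv_cancel₀ hf, hD1] at h
    field_simp at h ⊢
    nlinarith [h]
  set S : Set K := {x : K | ∃ f : K, 0 < f ∧ D f / f = x} with hS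
  -- set equality
  have hsetEq : S = {x : K | ∃ f : K, f < 0 ∧ D f / f = x} := by
    ext x
    constructor
    · rintro ⟨f, hf, hfx⟩
      exact ⟨-f, neg_neg_of_pos hf, by rw [hDneg, neg_div_neg_eq]; exact hfx⟩
    · rintro ⟨f, hf, hfx⟩
      exact ⟨-f, neg_pos.mpr hf, by rw [hDneg, neg_div_neg_eq]; exact hfx⟩
  -- key: element not in O dominates O in absolute value
  have key : ∀ f : K, f ∉ O → ∀ u ∈ O, u < |f| := by
    intro f hf u hu
    by_contra hle
    push_neg at hle
    have habs : |f| ∈ O := hK.convex _ _ (abs_nonneg f) hle hu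
    rcases abs_choice f with h | h
    · exact hf (h ▸ habs)
    · have h2 : -|f| ∈ O := O.neg_mem habs
      rw [h, neg_neg] at h2
      exact hf h2
  -- convexity of S
  have hconv : ∀ x y : K, 0 ≤ x → x ≤ y → y ∈ S → x ∈ S := by
    rintro x yv hx hxy ⟨g, hg, hgx⟩
    rcases hx.eq_or_lt with h0 | h0
    · exact ⟨1, one_pos, by simp [hD1, ← h0]⟩
    rcases hxy.eq_or_lt with h1 | h1
    · exact ⟨g, hg, by rw [hgx, ← h1]⟩
    -- 0 < x < yv = D g / g
    have hgx' : x < D g / g := by rw [hgx]; exact h1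
    obtain ⟨w, hw⟩ := hnt
    have ha0 : 0 < |w| := by
      have := key w hw 0 O.zero_mem
      linarith
    have haD : 0 < D |w| := hK.deriv_pos _ (key w hw)
    obtain ⟨h, hhO, hh0, hhx⟩ : ∃ h : K, (∀ u ∈ O, u < h) ∧ 0 < h ∧ x < D h / h := by
      by_cases hgO : g ∈ O
      · -- g is bounded; show g⁻¹ ∈ O, then use |w| * g
        have hginv : g⁻¹ ∈ O := by
          by_contra hgi
          have hkey := key g⁻¹ hgi
          have hgi0 : (0:K) < g⁻¹ := inv_pos.mpr hg
          have hDi : 0 < D g⁻¹ := by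
            apply hK.deriv_pos
            intro u hu
            have := hkey u hu
            rwa [abs_of_pos hgi0] at this
          have hl := hK.leibniz g g⁻¹
          rw [mul_inv_cancel₀ (ne_of_gt hg), hD1] at hl
          have hDg : D g < 0 := by nlinarith
          have : D g / g < 0 := div_neg_of_neg_of_pos hDg hg
          linarith
        refine ⟨|w| * g, ?_, mul_pos ha0 hg, ?_⟩
        · intro u hu
          have hm : |w| * g ∉ O := by
            intro hm
            have h2 : |w| * g * g⁻¹ ∈ O := O.mul_mem hm hginv
            rw [mul_assoc, mul_inv_cancel₀ (ne_of_gt hg), mul_one] at h2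
            rcases abs_choice w with hc | hc
            · exact hw (hc ▸ h2)
            · have h3 : -|w| ∈ O := O.neg_mem h2
              rw [hc, neg_neg] at h3
              exact hw h3
          have := key _ hm u hu
          rwa [abs_of_pos (mul_pos ha0 hg)] at this
        · rw [logMul _ _ (ne_of_gt ha0) (ne_of_gt hg)]
          have : 0 < D |w| / |w| := div_pos haD ha0
          linarith
      · refine ⟨g, ?_, hg, hgx'⟩
        intro u hu
        have := key g hgO u hu
        rwa [abs_of_pos hg] at this
    -- apply 1-DIVP to P = Y₁ - x·Y₀ on (1, h)
    set P : MvPolynomial (Fin 2) K := MvPolynomial.X 1 - MvPolynomial.C x * MvPolynomial.X 0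
      with hP
    have hev : ∀ z : K, MvPolynomial.eval (fun i : Fin 2 => D^[(i : ℕ)] z) P = D z - x * z := by
      intro z
      simp [hP]
    have h1h : (1 : K) < h := hhO 1 O.one_mem
    have hlow : MvPolynomial.eval (fun i : Fin 2 => D^[(i : ℕ)] (1:K)) P < 0 := by
      rw [hev]
      rw [hD1]
      linarith
    have hhigh : 0 < MvPolynomial.eval (fun i : Fin 2 => D^[(i : ℕ)] h) P := by
      rw [hev]
      have := (lt_div_iff₀ hh0).mp hhx
      linarith
    obtain ⟨z, hz1, hzh, hz0⟩ := hdivp P 1 h h1h hlow hhigh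
    rw [hev] at hz0
    have hz0' : 0 < z := lt_trans one_pos hz1
    exact ⟨z, hz0', by field_simp; linarith⟩
  have hzero : (0 : K) ∈ S := ⟨1, one_pos, by simp [hD1]⟩
  have hadd : ∀ {a b : K}, a ∈ S → b ∈ S → a + b ∈ S := by
    rintro a b ⟨f, hf, hfa⟩ ⟨g, hg, hgb⟩
    exact ⟨f * g, mul_pos hf hg, by
      rw [logMul f g (ne_of_gt hf) (ne_of_gt hg), hfa, hgb]⟩
  have hneg : ∀ {a : K}, a ∈ S → -a ∈ S := by
    rintro a ⟨f, hf, hfa⟩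
    exact ⟨f⁻¹, inv_pos.mpr hf, by rw [logInv f (ne_of_gt hf), hfa]⟩
  exact ⟨hsetEq, ⟨AddSubgroup.mk (AddSubmonoid.mk (AddSubsemigroup.mk S hadd) hzero) hneg,
    rfl, fun x y hx hxy hyG => hconv x y hx hxy hyG⟩⟩
end

section
/- Let K be a pre-H-field whose valuation is nontrivial (O ≠ K) and which has 1-DIVP. Then the set Ψ = {v(f†) : f ∈ K^×, ¬(f ≍ 1)} has no largest element; equivalently, for every f ∈ K^× with ¬(f ≍ 1) there exists g ∈ K^× with ¬(g ≍ 1) and g† ≺ f†. -/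
section Aux

variable {K : Type*} [Field K] [LinearOrder K] [IsStrictOrderedRing K] {D : K → K} {O : Subring K}

lemma aux_D_zero (hK : IsPreHField D O) : D 0 = 0 := by
  have h := hK.map_add 0 0
  simp only [add_zero] at h
  linarith

lemma aux_D_neg (hK : IsPreHField D O) (x : K) : D (-x) = -D x := by
  have h := hK.map_add x (-x)
  simp only [add_neg_cancel, aux_D_zero hK] at h
  linarith

lemma aux_D_one (hK : IsPreHField D O) : D 1 = 0 := by
  have h := hK.leibniz 1 1
  simp only [mul_one, one_mul] at h
  linarith

lemma aux_D_inv (hK : IsPreHField D O) (x : K) (hx : x ≠ 0) :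
    D x⁻¹ / x⁻¹ = -(D x / x) := by
  have h := hK.leibniz x x⁻¹
  rw [mul_inv_cancel₀ hx, aux_D_one hK] at h
  field_simp
  field_simp at h
  linarith

/-- Core lemma: for `u > O` there is `y > 0`, `y ∉ O`, with `y' = u† `. -/
lemma aux_core (hK : IsPreHField D O) (hdivp : DIVPat D 1)
    (u : K) (hu : ∀ g ∈ O, g < u) :
    ∃ y : K, 0 < y ∧ y ∉ O ∧ D y = D u / u := by
  have hu0 : 0 < u := hu 0 O.zero_mem
  have hu1 : 1 < u := hu 1 O.one_mem
  have huO : u ∉ O := fun h => lt_irrefl u (hu u h)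
  have hDu : 0 < D u := hK.deriv_pos u hu
  set s : K := D u / u with hs_def
  have hs : 0 < s := div_pos hDu hu0
  have huinv : u⁻¹ ∈ O := (hK.mem_or_inv_mem u (ne_of_gt hu0)).resolve_left huO
  -- apply DIVP to P = X 1 - C s on (0, u*u)
  have heval : ∀ x : K, MvPolynomial.eval (fun i : Fin (1 + 1) => D^[(i : ℕ)] x)
      (MvPolynomial.X 1 - MvPolynomial.C s) = D x - s := by
    intro x; simp
  have hlt : (0 : K) < u * u := by positivity
  have hf : MvPolynomial.eval (fun i : Fin (1 + 1) => D^[(i : ℕ)] (0 : K))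
      (MvPolynomial.X 1 - MvPolynomial.C s) < 0 := by
    rw [heval, aux_D_zero hK]; linarith
  have hg : 0 < MvPolynomial.eval (fun i : Fin (1 + 1) => D^[(i : ℕ)] (u * u))
      (MvPolynomial.X 1 - MvPolynomial.C s) := by
    rw [heval, hK.leibniz u u]
    have h1 : s < D u := by
      rw [hs_def, div_lt_iff₀ hu0]; nlinarith
    nlinarith
  obtain ⟨y, hy0, hyu, hyeq⟩ := hdivp (MvPolynomial.X 1 - MvPolynomial.C s) 0 (u * u) hlt hf hg
  rw [heval] at hyeq
  have hDy : D y = s := by linarith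
  refine ⟨y, hy0, ?_, hDy⟩
  -- y ∉ O : otherwise `small` gives D y ≺ (u⁻¹)† = -s, i.e. -1 ∈ 𝔬, absurd
  intro hyO
  have hprecl : precl O (u⁻¹) 1 := by
    refine ⟨one_ne_zero, ?_⟩
    rw [div_one]
    exact ⟨huinv, Or.inr (by rwa [inv_inv])⟩
  have hsm := hK.small y u⁻¹ (ne_of_gt hy0) (inv_ne_zero (ne_of_gt hu0))
    ⟨y, hyO, (mul_one y).symm⟩ hprecl
  rw [aux_D_inv hK u (ne_of_gt hu0)] at hsm
  obtain ⟨-, hmem, hbad⟩ := hsm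
  rw [hDy] at hmem hbad
  have hs' : s ≠ 0 := ne_of_gt hs
  have hval : s / -s = -1 := by field_simp
  rw [hval] at hmem hbad
  rcases hbad with h | h
  · norm_num at h
  · rw [inv_neg, inv_one] at h
    exact h (O.neg_mem O.one_mem)

end Aux

theorem stmt2 {K : Type*} [Field K] [LinearOrder K] [IsStrictOrderedRing K] (D : K → K) (O : Subring K)
    (hK : IsPreHField D O) (hnt : ∃ f : K, f ∉ O) (hdivp : DIVPat D 1) :
    ∀ f : K, f ≠ 0 → ¬ asymp O f 1 →
      ∃ g : K, g ≠ 0 ∧ ¬ asymp O g 1 ∧ precl O (D g / g) (D f / f) := by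
  intro f hf hna
  -- Step 1: find u with u > O and D f / f = ± (D u / u)
  have key : ∀ w : K, w ≠ 0 → w ∉ O → ∃ u : K, (∀ g ∈ O, g < u) ∧ D w / w = D u / u := by
    intro w hw hwO
    rcases lt_or_gt_of_ne hw with hneg | hpos
    · refine ⟨-w, ?_, ?_⟩
      · intro g hg
        by_contra hle
        push_neg at hle
        exact (fun h => hwO (by simpa using O.neg_mem h))
          (hK.convex (-w) g (by linarith) hle hg)
      · rw [aux_D_neg hK, neg_div_neg_eq]
    · refine ⟨w, ?_, rfl⟩
      intro g hg
      by_contra hle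
      push_neg at hle
      exact hwO (hK.convex w g (le_of_lt hpos) hle hg)
  have hmain : ∃ u : K, (∀ g ∈ O, g < u) ∧
      (D f / f = D u / u ∨ D f / f = -(D u / u)) := by
    by_cases hfO : f ∈ O
    · have hfinv : f⁻¹ ∉ O := by
        intro hinv
        exact hna ⟨⟨f, hfO, (mul_one f).symm⟩, ⟨f⁻¹, hinv, (inv_mul_cancel₀ hf).symm⟩⟩
      obtain ⟨u, hu, heq⟩ := key f⁻¹ (inv_ne_zero hf) hfinv
      refine ⟨u, hu, Or.inr ?_⟩
      rw [← heq, aux_D_inv hK f hf, neg_neg]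
    · obtain ⟨u, hu, heq⟩ := key f hf hfO
      exact ⟨u, hu, Or.inl heq⟩
  obtain ⟨u, hu, hsgn⟩ := hmain
  obtain ⟨y, hy0, hyO, hDy⟩ := aux_core hK hdivp u hu
  have hu0 : 0 < u := hu 0 O.zero_mem
  have hDu : 0 < D u := hK.deriv_pos u hu
  have hs : (0 : K) < D u / u := div_pos hDu hu0
  have hs' : D u / u ≠ 0 := ne_of_gt hs
  have hyne : y ≠ 0 := ne_of_gt hy0
  have hyinv : y⁻¹ ∈ O := (hK.mem_or_inv_mem y hyne).resolve_left hyO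
  refine ⟨y, hyne, ?_, ?_⟩
  · rintro ⟨⟨h, hhO, hyh⟩, -⟩
    rw [mul_one] at hyh
    exact hyO (hyh ▸ hhO)
  · have hinvm : y⁻¹ ∈ mIdeal O :=
      ⟨hyinv, Or.inr (by rwa [inv_inv])⟩
    rcases hsgn with h | h
    · refine ⟨h ▸ hs', ?_⟩
      rw [h, hDy]
      have : (D u / u / y) / (D u / u) = y⁻¹ := by field_simp
      rw [this]
      exact hinvm
    · refine ⟨by rw [h]; exact neg_ne_zero.mpr hs', ?_⟩
      rw [h, hDy]
      have : (D u / u / y) / -(D u / u) = -y⁻¹ := by field_simp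
      rw [this]
      refine ⟨O.neg_mem hyinv, Or.inr ?_⟩
      rw [inv_neg, inv_inv]
      intro hmem
      exact hyO (by simpa using O.neg_mem hmem)
end

section
/- Let K be an ordered differential field having 1-DIVP, let a, b ∈ K with a > 0 and b > 0, and let s ∈ K lie strictly between a† and b†. Then there exists y ∈ K lying strictly between a and b with y† = s. -/
lemma key_lem {K : Type*} [Field K] [LinearOrder K] [IsStrictOrderedRing K] (D : K → K)
    (hdivp : DIVPat D 1) (f g s : K) (hf : 0 < f) (hfg : f < g)
    (h1 : D f - s * f < 0) (h2 : 0 < D g - s * g) :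
    ∃ y : K, f < y ∧ y < g ∧ D y / y = s := by
  set P : MvPolynomial (Fin 2) K :=
    MvPolynomial.X 1 - MvPolynomial.C s * MvPolynomial.X 0 with hP
  have heval : ∀ x : K,
      MvPolynomial.eval (fun i : Fin 2 => D^[(i : ℕ)] x) P = D x - s * x := by
    intro x
    simp [hP]
  obtain ⟨y, hy1, hy2, hy3⟩ := hdivp P f g hfg (by rw [heval]; exact h1)
    (by rw [heval]; exact h2)
  rw [heval] at hy3
  have hy0 : 0 < y := lt_trans hf hy1
  refine ⟨y, hy1, hy2, ?_⟩
  rw [div_eq_iff (ne_of_gt hy0)]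
  linarith


lemma key_lem' {K : Type*} [Field K] [LinearOrder K] [IsStrictOrderedRing K] (D : K → K)
    (hdivp : DIVPat D 1) (f g s : K) (hf : 0 < f) (hfg : f < g)
    (h1 : 0 < D f - s * f) (h2 : D g - s * g < 0) :
    ∃ y : K, f < y ∧ y < g ∧ D y / y = s := by
  set P : MvPolynomial (Fin 2) K :=
    MvPolynomial.C s * MvPolynomial.X 0 - MvPolynomial.X 1 with hP
  have heval : ∀ x : K,
      MvPolynomial.eval (fun i : Fin 2 => D^[(i : ℕ)] x) P = s * x - D x := by
    intro x
    simp [hP]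
  obtain ⟨y, hy1, hy2, hy3⟩ := hdivp P f g hfg (by rw [heval]; linarith)
    (by rw [heval]; linarith)
  rw [heval] at hy3
  have hy0 : 0 < y := lt_trans hf hy1
  refine ⟨y, hy1, hy2, ?_⟩
  rw [div_eq_iff (ne_of_gt hy0)]
  linarith

theorem stmt4 {K : Type*} [Field K] [LinearOrder K] [IsStrictOrderedRing K] (D : K → K)
    (hadd : ∀ a b : K, D (a + b) = D a + D b)
    (hmul : ∀ a b : K, D (a * b) = a * D b + b * D a)
    (hdivp : DIVPat D 1) (a b s : K) (ha : 0 < a) (hb : 0 < b)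
    (hs : (D a / a < s ∧ s < D b / b) ∨ (D b / b < s ∧ s < D a / a)) :
    ∃ y : K, ((a < y ∧ y < b) ∨ (b < y ∧ y < a)) ∧ D y / y = s := by
  have hab : a ≠ b := by
    rintro rfl
    rcases hs with ⟨h1, h2⟩ | ⟨h1, h2⟩ <;> exact absurd (lt_trans h1 h2) (lt_irrefl _)
  -- translate div inequalities into linear ones
  rcases hs with ⟨h1, h2⟩ | ⟨h1, h2⟩
  · have h1' : D a - s * a < 0 := by
      have := (div_lt_iff₀ ha).mp h1; linarith
    have h2' : 0 < D b - s * b := by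
      have := (lt_div_iff₀ hb).mp h2; linarith
    rcases lt_or_gt_of_ne hab with h | h
    · obtain ⟨y, hy1, hy2, hy3⟩ := key_lem D hdivp a b s ha h h1' h2'
      exact ⟨y, Or.inl ⟨hy1, hy2⟩, hy3⟩
    · -- b < a : use negated polynomial via key_lem with D replaced? Use symmetric trick:
      -- apply key_lem to (fun x => -D x)? Instead use P' = sX0 - X1, i.e. key_lem with s and swapped signs.
      obtain ⟨y, hy1, hy2, hy3⟩ := key_lem' D hdivp b a s hb h h2' h1'
      exact ⟨y, Or.inr ⟨hy1, hy2⟩, hy3⟩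
  · have h1' : D b - s * b < 0 := by
      have := (div_lt_iff₀ hb).mp h1; linarith
    have h2' : 0 < D a - s * a := by
      have := (lt_div_iff₀ ha).mp h2; linarith
    rcases lt_or_gt_of_ne hab with h | h
    · obtain ⟨y, hy1, hy2, hy3⟩ := key_lem' D hdivp a b s ha h h2' h1'
      exact ⟨y, Or.inl ⟨hy1, hy2⟩, hy3⟩
    · obtain ⟨y, hy1, hy2, hy3⟩ := key_lem D hdivp b a s hb h h1' h2'
      exact ⟨y, Or.inr ⟨hy1, hy2⟩, hy3⟩
end

section
/- Let K be a pre-H-field which has 1-DIVP and which has no gap. Then K is an H-field: for every f ∈ O there exists c ∈ K with c′ = 0 and f − c ∈ 𝔬, and f′ > 0 for every f ∈ K such that f > c for every c ∈ K with c′ = 0. -/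
/-- `s` is a gap in the pre-`H`-field `K`. -/
def IsGap {K : Type*} [Field K] [LinearOrder K] [IsStrictOrderedRing K] (D : K → K) (O : Subring K) (s : K) : Prop :=
  s ≠ 0 ∧ (∀ g : K, g ≠ 0 → ¬ asymp O g 1 → precl O s (D g / g)) ∧
    (∀ h : K, h ≠ 0 → precl O h 1 → precl O (D h) s)

section Helpers
variable {K : Type*} [Field K] [LinearOrder K] [IsStrictOrderedRing K] {O : Subring K}

lemma absO {u : K} (hu : u ∈ O) : |u| ∈ O := by
  rcases abs_cases u with ⟨e, _⟩ | ⟨e, _⟩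
  · rw [e]; exact hu
  · rw [e]; exact O.neg_mem hu

lemma memO_of_abs_le (hconv : ∀ a b : K, 0 ≤ a → a ≤ b → b ∈ O → a ∈ O)
    {a b : K} (h : |a| ≤ b) (hb : b ∈ O) : a ∈ O := by
  have h1 : |a| ∈ O := hconv _ _ (abs_nonneg a) h hb
  rcases abs_cases a with ⟨e, _⟩ | ⟨e, _⟩
  · rwa [e] at h1
  · have := O.neg_mem h1; rwa [e, neg_neg] at this

lemma mIdeal_of_abs_le (hconv : ∀ a b : K, 0 ≤ a → a ≤ b → b ∈ O → a ∈ O)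
    {x y : K} (hx : x ∈ mIdeal O) (h : |y| ≤ |x|) : y ∈ mIdeal O := by
  obtain ⟨hxO, hx2⟩ := hx
  refine ⟨memO_of_abs_le hconv h (absO hxO), ?_⟩
  by_cases hy0 : y = 0
  · exact Or.inl hy0
  · refine Or.inr fun hyi => ?_
    have hx0 : x ≠ 0 := by
      intro h0; rw [h0, abs_zero] at h
      exact hy0 (abs_nonpos_iff.mp h)
    rcases hx2 with h0 | hxi
    · exact hx0 h0
    · apply hxi
      have hxinv : |x⁻¹| ≤ |y⁻¹| := by
        rw [abs_inv, abs_inv]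
        exact inv_anti₀ (abs_pos.mpr hy0) h
      exact memO_of_abs_le hconv hxinv (absO hyi)

lemma mIdeal_abs_lt_one (hconv : ∀ a b : K, 0 ≤ a → a ≤ b → b ∈ O → a ∈ O)
    {x : K} (hx : x ∈ mIdeal O) : |x| < 1 := by
  by_contra hge
  push_neg at hge
  have hx0 : x ≠ 0 := by intro h0; rw [h0, abs_zero] at hge; linarith
  rcases hx.2 with h0 | hxi
  · exact hx0 h0
  · apply hxi
    have : |x⁻¹| ≤ 1 := by
      rw [abs_inv]
      exact inv_le_one_of_one_le₀ hge
    exact memO_of_abs_le hconv this O.one_mem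

lemma mIdeal_neg {x : K} (hx : x ∈ mIdeal O) : -x ∈ mIdeal O := by
  refine ⟨O.neg_mem hx.1, ?_⟩
  rcases hx.2 with h0 | hxi
  · exact Or.inl (by rw [h0, neg_zero])
  · refine Or.inr fun h => hxi ?_
    rw [inv_neg] at h
    have := O.neg_mem h; rwa [neg_neg] at this

lemma mIdeal_mul_O {x b : K} (hx : x ∈ mIdeal O) (hb : b ∈ O) : b * x ∈ mIdeal O := by
  refine ⟨O.mul_mem hb hx.1, ?_⟩
  by_cases h0 : b * x = 0
  · exact Or.inl h0
  · refine Or.inr fun hi => ?_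
    have hx0 : x ≠ 0 := fun h => h0 (by rw [h, mul_zero])
    have hb0 : b ≠ 0 := fun h => h0 (by rw [h, zero_mul])
    rcases hx.2 with h | hxi
    · exact hx0 h
    · apply hxi
      have : x⁻¹ = b * (b * x)⁻¹ := by field_simp
      rw [this]; exact O.mul_mem hb hi

end Helpers

theorem stmt5 {K : Type*} [Field K] [LinearOrder K] [IsStrictOrderedRing K] (D : K → K) (O : Subring K)
    (hK : IsPreHField D O) (hdivp : DIVPat D 1) (hng : ¬ ∃ s : K, IsGap D O s) :
    (∀ f ∈ O, ∃ c : K, D c = 0 ∧ f - c ∈ mIdeal O) ∧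
    (∀ f : K, (∀ c : K, D c = 0 → c < f) → 0 < D f) := by
  have hD0 : D 0 = 0 := by have := hK.map_add 0 0; simp at this; linarith
  have hDneg : ∀ a : K, D (-a) = -D a := by
    intro a
    have h := hK.map_add a (-a)
    rw [add_neg_cancel, hD0] at h; linarith
  have hDsub : ∀ a b : K, D (a - b) = D a - D b := by
    intro a b; rw [sub_eq_add_neg, hK.map_add, hDneg]; ring
  have hD1 : D 1 = 0 := by
    have := hK.leibniz 1 1; simp at this; linarith
  have hDinv : ∀ g : K, g ≠ 0 → D g⁻¹ / g⁻¹ = -(D g / g) := by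
    intro g hg
    have h := hK.leibniz g g⁻¹
    rw [mul_inv_cancel₀ hg, hD1] at h
    field_simp
    field_simp at h
    linarith
  have heval : ∀ y : K,
      MvPolynomial.eval (fun i : Fin (1 + 1) => D^[(i : ℕ)] y)
        (MvPolynomial.X 1 : MvPolynomial (Fin (1 + 1)) K) = D y := by
    intro y; simp
  have heval2 : ∀ y : K,
      MvPolynomial.eval (fun i : Fin (1 + 1) => D^[(i : ℕ)] y)
        (-MvPolynomial.X 1 : MvPolynomial (Fin (1 + 1)) K) = -D y := by
    intro y; simp
  constructor
  · -- Part 1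
    intro f hfO
    by_cases hDf : D f = 0
    · exact ⟨f, hDf, by rw [sub_self]; exact ⟨O.zero_mem, Or.inl rfl⟩⟩
    have hf0 : f ≠ 0 := fun h => hDf (by rw [h]; exact hD0)
    have hfpre : preceq O f 1 := ⟨f, hfO, (mul_one f).symm⟩
    have cond1 : ∀ g : K, g ≠ 0 → ¬ asymp O g 1 → precl O (D f) (D g / g) := by
      intro g hg hna
      have hcase : g ∉ (O : Set K) ∨ g⁻¹ ∉ (O : Set K) := by
        by_contra hc
        push_neg at hc
        exact hna ⟨⟨g, hc.1, (mul_one g).symm⟩, ⟨g⁻¹, hc.2, (inv_mul_cancel₀ hg).symm⟩⟩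
      rcases hcase with hgn | hgin
      · -- g ∉ O, so g⁻¹ ∈ 𝔬 ; apply small with g⁻¹
        have hgi : g⁻¹ ∈ O := (hK.mem_or_inv_mem g hg).resolve_left hgn
        have hgiI : g⁻¹ ∈ mIdeal O := ⟨hgi, Or.inr (by rwa [inv_inv])⟩
        have res := hK.small f g⁻¹ hf0 (inv_ne_zero hg) hfpre
          ⟨one_ne_zero, by rw [div_one]; exact hgiI⟩
        rw [hDinv g hg] at res
        refine ⟨fun h => res.1 (by rw [h, neg_zero]), ?_⟩
        have := mIdeal_neg res.2
        rwa [div_neg, neg_neg] at this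
      · have hgO : g ∈ O := (hK.mem_or_inv_mem g hg).resolve_right hgin
        exact hK.small f g hf0 hg hfpre
          ⟨one_ne_zero, by rw [div_one]; exact ⟨hgO, Or.inr hgin⟩⟩
    have hcond2 : ¬ ∀ h : K, h ≠ 0 → precl O h 1 → precl O (D h) (D f) := by
      intro hc; exact hng ⟨D f, hDf, cond1, hc⟩
    push_neg at hcond2
    obtain ⟨h, hh0, hh1, hhd⟩ := hcond2
    have hDh : D h ≠ 0 := by
      intro h0
      exact hhd ⟨hDf, by rw [h0, zero_div]; exact ⟨O.zero_mem, Or.inl rfl⟩⟩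
    have hu0 : D f / D h ∈ O := by
      rcases hK.mem_or_inv_mem (D h / D f) (div_ne_zero hDh hDf) with hm | hm
      · by_contra hnot
        exact hhd ⟨hDf, hm, Or.inr (by rwa [inv_div])⟩
      · rwa [inv_div] at hm
    have hhI : h ∈ mIdeal O := by have := hh1.2; rwa [div_one] at this
    obtain ⟨ε, hε0, hεm, hεD⟩ : ∃ ε : K, 0 < ε ∧ ε ∈ mIdeal O ∧ (D ε = D h ∨ D ε = -D h) := by
      rcases lt_trichotomy h 0 with hlt | heq | hgt
      · exact ⟨-h, by linarith, mIdeal_neg hhI, Or.inr (hDneg h)⟩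
      · exact absurd heq hh0
      · exact ⟨h, hgt, hhI, Or.inl rfl⟩
    have hDε : D ε ≠ 0 := by
      rcases hεD with e | e <;> rw [e] <;> simpa using hDh
    have huO : D f / D ε ∈ O := by
      rcases hεD with e | e
      · rwa [e]
      · rw [e, div_neg]; exact O.neg_mem hu0
    set u := D f / D ε with hu
    have hfu : D f = u * D ε := (div_mul_cancel₀ _ hDε).symm
    have h2O : (2 : K) ∈ O := by
      have := O.add_mem O.one_mem O.one_mem
      rwa [one_add_one_eq_two] at this
    set w := |u| + 2 with hwdef
    have hwO : w ∈ O := O.add_mem (absO huO) h2O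
    have hw2 : (2 : K) ≤ w := le_add_of_nonneg_left (abs_nonneg u)
    have hws := hK.small w ε (by positivity) (ne_of_gt hε0)
      ⟨w, hwO, (mul_one w).symm⟩ ⟨one_ne_zero, by rw [div_one]; exact hεm⟩
    have key : |ε * D w| < |D ε| := by
      have h1 := mIdeal_abs_lt_one hK.convex hws.2
      rw [div_div_eq_mul_div, abs_div, div_lt_one (abs_pos.mpr hDε)] at h1
      rwa [mul_comm]
    have hDa : D (f - w * ε) = (u - w) * D ε - ε * D w := by
      rw [hDsub, hK.leibniz, hfu]; ring
    have hDb : D (f + w * ε) = (u + w) * D ε + ε * D w := by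
      rw [hK.map_add, hK.leibniz, hfu]; ring
    have hum : u - w ≤ -2 := by
      have := le_abs_self u; rw [hwdef]; linarith
    have hup : (2 : K) ≤ u + w := by
      have := neg_abs_le u; rw [hwdef]; linarith
    have hwε0 : (0:K) < w * ε := mul_pos (by linarith) hε0
    have hab : f - w * ε < f + w * ε := by linarith
    have hfin : ∀ y : K, f - w * ε < y → y < f + w * ε → D y = 0 →
        ∃ c : K, D c = 0 ∧ f - c ∈ mIdeal O := by
      intro y hy1 hy2 hy3
      refine ⟨y, hy3, ?_⟩
      have hwε : w * ε ∈ mIdeal O := mIdeal_mul_O hεm hwO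
      refine mIdeal_of_abs_le hK.convex hwε ?_
      rw [abs_of_pos hwε0]
      rw [abs_le]
      constructor <;> linarith
    rcases lt_trichotomy (D ε) 0 with hd | hd | hd
    · -- D ε < 0 : use -X 1
      have he := abs_lt.mp (by rwa [abs_of_neg hd] at key)
      have ha : 0 < D (f - w * ε) := by
        rw [hDa]; linarith [mul_le_mul_of_nonpos_right hum hd.le, he.1, he.2]
      have hb : D (f + w * ε) < 0 := by
        rw [hDb]; linarith [mul_le_mul_of_nonpos_right hup hd.le, he.1, he.2]
      obtain ⟨y, hy1, hy2, hy3⟩ := hdivp (-MvPolynomial.X 1) (f - w * ε) (f + w * ε) hab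
        (by rw [heval2]; linarith) (by rw [heval2]; linarith)
      rw [heval2, neg_eq_zero] at hy3
      exact hfin y hy1 hy2 hy3
    · exact absurd hd hDε
    · have he := abs_lt.mp (by rwa [abs_of_pos hd] at key)
      have ha : D (f - w * ε) < 0 := by
        rw [hDa]; linarith [mul_le_mul_of_nonneg_right hum hd.le, he.1, he.2]
      have hb : 0 < D (f + w * ε) := by
        rw [hDb]; linarith [mul_le_mul_of_nonneg_right hup hd.le, he.1, he.2]
      obtain ⟨y, hy1, hy2, hy3⟩ := hdivp (MvPolynomial.X 1) (f - w * ε) (f + w * ε) hab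
        (by rw [heval]; exact ha) (by rw [heval]; exact hb)
      rw [heval] at hy3
      exact hfin y hy1 hy2 hy3
  · -- Part 2
    intro f hfc
    obtain ⟨t, htn⟩ : ∃ t : K, t ∉ (O : Set K) := by
      by_contra hc
      push_neg at hc
      apply hng
      refine ⟨1, one_ne_zero, ?_, ?_⟩
      · intro g hg hna
        exact absurd ⟨⟨g, hc g, (mul_one g).symm⟩, ⟨g⁻¹, hc g⁻¹, (inv_mul_cancel₀ hg).symm⟩⟩ hna
      · intro h hh hpre
        have := hpre.2
        rw [div_one] at this
        rcases this.2 with h0 | hi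
        · exact absurd h0 hh
        · exact absurd (hc h⁻¹) hi
    have htt : ∀ g ∈ O, g < |t| := by
      intro g hg
      by_contra hge
      push_neg at hge
      exact htn (memO_of_abs_le hK.convex hge hg)
    have hDt : 0 < D |t| := hK.deriv_pos _ htt
    have hDfne : D f ≠ 0 := fun h0 => absurd (hfc f h0) (lt_irrefl f)
    rcases lt_trichotomy (D f) 0 with hneg | h0 | hpos
    · exfalso
      have hfO : f ∈ O := by
        by_contra hfn
        have hf0 : (0:K) < f := hfc 0 hD0
        have : ∀ g ∈ O, g < f := by
          intro g hg
          have := htt g hg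
          -- need |f| = f and f ∉ O implies g < f; redo directly
          by_contra hge
          push_neg at hge
          exact hfn (memO_of_abs_le hK.convex (by rw [abs_of_pos hf0]; exact hge) hg)
        linarith [hK.deriv_pos f this]
      have hft : f < |t| := htt f hfO
      obtain ⟨y, hy1, hy2, hy3⟩ := hdivp (MvPolynomial.X 1) f |t| hft
        (by rw [heval]; exact hneg) (by rw [heval]; exact hDt)
      rw [heval] at hy3
      exact absurd hy1 (not_lt.mpr (le_of_lt (hfc y hy3)))
    · exact absurd h0 hDfne
    · exact hpos
end

section
/- Let K be an H-field with asymptotic integration. Then K^> = I(K)^> ∪ Γ(K)^↑: for every f ∈ K with f > 0, either f ≼ g′ for some g ∈ O, or a† ≤ f for some a ∈ K ∖ O; conversely, every element of I(K)^> ∪ Γ(K)^↑ is positive (in particular a† > 0 for every a ∈ K ∖ O). -/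
/-- The valuation ring `O = {f : |f| ≤ c for some constant c}` of the ordered differential
field `K` with derivation `D`. -/
def Oring {K : Type*} [Field K] [LinearOrder K] [IsStrictOrderedRing K] (D : K → K) : Set K :=
  {f | ∃ c : K, D c = 0 ∧ |f| ≤ c}

/-- The maximal ideal `𝔬 = {f : |f| < c for all positive constants c}` of `O`. -/
def oideal {K : Type*} [Field K] [LinearOrder K] [IsStrictOrderedRing K] (D : K → K) : Set K :=
  {f | ∀ c : K, D c = 0 → 0 < c → |f| < c}

/-- `f ≼ g` : `|f| ≤ c|g|` for some constant `c`. -/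
def hpreceq {K : Type*} [Field K] [LinearOrder K] [IsStrictOrderedRing K] (D : K → K) (f g : K) : Prop :=
  ∃ c : K, D c = 0 ∧ |f| ≤ c * |g|

/-- `f ≍ g` : `f ≼ g` and `g ≼ f`. -/
def hasymp {K : Type*} [Field K] [LinearOrder K] [IsStrictOrderedRing K] (D : K → K) (f g : K) : Prop :=
  hpreceq D f g ∧ hpreceq D g f

/-- The ordered field `K` with derivation `D` is an `H`-field. -/
structure IsHField {K : Type*} [Field K] [LinearOrder K] [IsStrictOrderedRing K] (D : K → K) : Prop where
  map_add : ∀ a b : K, D (a + b) = D a + D b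
  leibniz : ∀ a b : K, D (a * b) = a * D b + b * D a
  deriv_pos : ∀ f : K, (∀ c : K, D c = 0 → c < f) → 0 < D f
  res_const : ∀ f ∈ Oring D, ∃ c : K, D c = 0 ∧ f - c ∈ oideal D

/-- `ω(z) = −2z′ − z²`. -/
def omg {K : Type*} [Field K] [LinearOrder K] [IsStrictOrderedRing K] (D : K → K) (z : K) : K :=
  -2 * D z - z ^ 2

/-- `σ(y) = ω(−y†) + y²`. -/
def sig {K : Type*} [Field K] [LinearOrder K] [IsStrictOrderedRing K] (D : K → K) (y : K) : K :=
  omg D (-(D y / y)) + y ^ 2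

section Aux
variable {K : Type*} [Field K] [LinearOrder K] [IsStrictOrderedRing K] {D : K → K}

lemma Dzero (hK : IsHField D) : D 0 = 0 := by
  have h := hK.map_add 0 0
  simp only [add_zero] at h
  linarith

lemma Dneg (hK : IsHField D) (a : K) : D (-a) = -D a := by
  have h := hK.map_add a (-a)
  simp only [add_neg_cancel] at h
  rw [Dzero hK] at h
  linarith

lemma notO_lt_abs (hg : g ∉ Oring D) : ∀ c : K, D c = 0 → c < |g| := by
  intro c hc
  by_contra hlt
  exact hg ⟨c, hc, le_of_not_gt hlt⟩

lemma notO_ne_zero (hK : IsHField D) (hg : g ∉ Oring D) : g ≠ 0 := by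
  intro h
  exact hg ⟨0, Dzero hK, by simp [h]⟩

lemma dagger_pos (hK : IsHField D) (hg : g ∉ Oring D) : 0 < D g / g := by
  have habs : 0 < D |g| := hK.deriv_pos _ (notO_lt_abs hg)
  have hg0 : g ≠ 0 := notO_ne_zero hK hg
  rcases abs_cases g with ⟨h1, h2⟩ | ⟨h1, h2⟩
  · rw [h1] at habs
    exact div_pos habs (lt_of_le_of_ne h2 (Ne.symm hg0))
  · rw [h1, Dneg hK] at habs
    exact div_pos_of_neg_of_neg (by linarith) h2

end Aux

theorem stmt8 {K : Type*} [Field K] [LinearOrder K] [IsStrictOrderedRing K] (D : K → K)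
    (hK : IsHField D) (hai : ∀ f : K, f ≠ 0 → ∃ g : K, hasymp D (D g) f) :
    {f : K | 0 < f} =
      {y : K | 0 < y ∧ ∃ f ∈ Oring D, hpreceq D y (D f)} ∪
      {f : K | ∃ a : K, a ∉ Oring D ∧ D a / a ≤ f} := by
  ext f
  simp only [Set.mem_union, Set.mem_setOf_eq]
  constructor
  · intro hf
    obtain ⟨g, hg1, hg2⟩ := hai f (ne_of_gt hf)
    by_cases hgO : g ∈ Oring D
    · exact Or.inl ⟨hf, g, hgO, hg2⟩
    · refine Or.inr ⟨g, hgO, ?_⟩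
      obtain ⟨c, hc, hcle⟩ := hg1
      have hglt : c < |g| := notO_lt_abs hgO c hc
      have hg0 : g ≠ 0 := notO_ne_zero hK hgO
      have hgabs : (0:K) < |g| := abs_pos.mpr hg0
      have ht : 0 < D g / g := dagger_pos hK hgO
      have htg : (D g / g) * |g| = |D g| := by
        rw [← abs_of_pos ht, ← abs_mul, div_mul_cancel₀ _ hg0]
      rw [abs_of_pos hf] at hcle
      nlinarith [abs_nonneg (D g)]
  · rintro (⟨hy, -⟩ | ⟨a, haO, hle⟩)
    · exact hy
    · exact lt_of_lt_of_le (dagger_pos hK haO) hle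
end

section
/- Let K be an H-field with asymptotic integration. Then σ(K^> ∖ Γ(K)^↑) ⊆ ω(Λ(K))^↓: for every s ∈ K with s > 0 such that there is no a ∈ K ∖ O with a† ≤ s, there exists a ∈ K ∖ O with σ(s) ≤ ω(−(a†)†); here a† ≠ 0 for every a ∈ K ∖ O, so (a†)† is defined. -/
section helpers
variable {K : Type*} [Field K] [LinearOrder K] [IsStrictOrderedRing K] (D : K → K)

lemma auxD0 (hmul : ∀ a b : K, D (a * b) = a * D b + b * D a) : D 0 = 0 := by
  have h := hmul 0 0
  simpa using h

lemma auxD1 (hmul : ∀ a b : K, D (a * b) = a * D b + b * D a) : D 1 = 0 := by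
  have h := hmul 1 1
  simp at h
  linarith

lemma auxDneg (hadd : ∀ a b : K, D (a + b) = D a + D b)
    (hmul : ∀ a b : K, D (a * b) = a * D b + b * D a) (x : K) : D (-x) = -D x := by
  have h := hadd x (-x)
  simp [auxD0 D hmul] at h
  linarith

lemma auxDdiv (hmul : ∀ a b : K, D (a * b) = a * D b + b * D a)
    (x y : K) (hy : y ≠ 0) : D (x / y) = (D x * y - x * D y) / y ^ 2 := by
  have h := hmul (x / y) y
  rw [div_mul_cancel₀ x hy] at h
  rw [eq_div_iff (pow_ne_zero 2 hy)]
  field_simp at h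
  linear_combination -h

end helpers

set_option maxHeartbeats 1000000 in
lemma lemA {K : Type*} [Field K] [LinearOrder K] [IsStrictOrderedRing K] {D : K → K} (hK : IsHField D)
    {g : K} (hg : ∀ c : K, D c = 0 → c < g) {f : K} (hf : f ∈ oideal D)
    {k : K} (hk : D k = 0) (hkpos : 0 < k) : |D f| < k * (D g / g) := by
  have hmul := hK.leibniz
  have hadd := hK.map_add
  have hD0 : D 0 = 0 := auxD0 D hmul
  have hD1 : D 1 = 0 := auxD1 D hmul
  have hf' : ∀ c : K, D c = 0 → 0 < c → |f| < c := hf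
  have hg0 : 0 < g := hg 0 hD0
  have hDg : 0 < D g := hK.deriv_pos g hg
  have hkne : k ≠ 0 := ne_of_gt hkpos
  have hcinv : ∀ c : K, c ≠ 0 → D c = 0 → D c⁻¹ = 0 := by
    intro c hc hDc
    have h := hmul c c⁻¹
    rw [mul_inv_cancel₀ hc, hD1, hDc] at h
    have h2 : c * D c⁻¹ = 0 := by linarith
    rcases mul_eq_zero.mp h2 with h3 | h3
    · exact absurd h3 hc
    · exact h3
  have hD2 : D (2:K) = 0 := by
    have h := hadd 1 1
    norm_num [hD1] at h
    exact h
  have hD4 : D (4:K) = 0 := by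
    have h := hmul 2 2
    norm_num [hD2] at h
    exact h
  set n := 4 / k with hn
  have hnD : D n = 0 := by
    rw [hn, div_eq_mul_inv, hmul, hcinv k hkne hk, hD4]
    ring
  have hnpos : 0 < n := by rw [hn]; positivity
  have h2n : (0:K) < 2 * n := by linarith
  have h2nD : D (2*n) = 0 := by rw [hmul, hnD, hD2]; ring
  have hfb := hf' ((2*n)⁻¹) (hcinv _ (ne_of_gt h2n) h2nD) (by positivity)
  have hfb1 : f < (2*n)⁻¹ := (abs_lt.mp hfb).2
  have hfb2 : -(2*n)⁻¹ < f := (abs_lt.mp hfb).1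
  have hinv2n : (2*n) * (2*n)⁻¹ = 1 := mul_inv_cancel₀ (ne_of_gt h2n)
  have hnf1 : n * f < 1/2 := by
    rcases le_or_gt f 0 with h | h
    · nlinarith
    · nlinarith [mul_lt_mul_of_pos_left hfb1 h2n]
  have hnf2 : -(1/2) < n * f := by
    rcases le_or_gt 0 f with h | h
    · nlinarith
    · nlinarith [mul_lt_mul_of_pos_left hfb2 h2n]
  have hnk : n * k = 4 := by rw [hn]; field_simp
  have hub : D f < k * (D g / g) := by
    have hφ : ∀ cc : K, D cc = 0 → cc < g - n * (g * f) := by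
      intro cc hcc
      have h := hg (cc + cc) (by rw [hadd, hcc]; ring)
      nlinarith [mul_lt_mul_of_pos_left hnf1 hg0]
    have hd := hK.deriv_pos _ hφ
    have e1 : D (g - n * (g * f)) = D g - n * (g * D f + f * D g) := by
      have e0 : g - n*(g*f) = g + (-(n*(g*f))) := by ring
      rw [e0, hadd, auxDneg D hadd hmul, hmul n (g*f), hmul g f, hnD]
      ring
    rw [e1] at hd
    have h3 : n * (g * D f) < (3/2) * D g := by
      nlinarith [mul_lt_mul_of_pos_right hnf2 hDg]
    have h4 : 4 * (g * D f) < (3/2) * (k * D g) := by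
      have h5 := mul_lt_mul_of_pos_right h3 hkpos
      calc 4 * (g * D f) = n * (g * D f) * k := by rw [← hnk]; ring
        _ < (3/2) * D g * k := h5
        _ = (3/2) * (k * D g) := by ring
    rw [← mul_div_assoc, lt_div_iff₀ hg0]
    nlinarith [mul_pos hkpos hDg]
  have hlb : -(k * (D g / g)) < D f := by
    have hφ : ∀ cc : K, D cc = 0 → cc < g + n * (g * f) := by
      intro cc hcc
      have h := hg (cc + cc) (by rw [hadd, hcc]; ring)
      nlinarith [mul_lt_mul_of_pos_left hnf2 hg0]
    have hd := hK.deriv_pos _ hφ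
    have e1 : D (g + n * (g * f)) = D g + n * (g * D f + f * D g) := by
      rw [hadd, hmul n (g*f), hmul g f, hnD]
      ring
    rw [e1] at hd
    have h3 : -((3/2) * D g) < n * (g * D f) := by
      nlinarith [mul_lt_mul_of_pos_right hnf1 hDg]
    have h4 : -((3/2) * (k * D g)) < 4 * (g * D f) := by
      have h5 := mul_lt_mul_of_pos_right h3 hkpos
      calc -((3/2) * (k * D g)) = -((3/2) * D g) * k := by ring
        _ < n * (g * D f) * k := h5
        _ = 4 * (g * D f) := by rw [← hnk]; ring
    have h6 : -(k * D g) < D f * g := by nlinarith [mul_pos hkpos hDg]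
    calc -(k * (D g / g)) = (-(k * D g)) / g := by ring
      _ < D f := by rw [div_lt_iff₀ hg0]; linarith
  exact abs_lt.mpr ⟨hlb, hub⟩


lemma numlem {K : Type*} [Field K] [LinearOrder K] [IsStrictOrderedRing K] {u h x s : K} (hu : 0 < u) (hs : 0 < s)
    (h1 : -(16⁻¹ * u) < x) (h2 : -(1 / 2 * u) < h) (h3 : s < u / 8) :
    0 ≤ 2 * (u * x) + (u + h) ^ 2 - s ^ 2 := by
  have p1 : u * (-(16⁻¹ * u)) < u * x := mul_lt_mul_of_pos_left h1 hu
  have p2 : 0 < (u + h - u / 2) * (u + h + u / 2) :=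
    mul_pos (by linarith) (by linarith)
  have p3 : 0 < (u / 8 - s) * (u / 8 + s) := mul_pos (by linarith) (by linarith)
  nlinarith [p1, p2, p3, sq_nonneg u]

set_option maxHeartbeats 2000000 in
theorem stmt9 {K : Type*} [Field K] [LinearOrder K] [IsStrictOrderedRing K] (D : K → K)
    (hK : IsHField D) (hai : ∀ f : K, f ≠ 0 → ∃ g : K, hasymp D (D g) f) :
    ∀ s : K, 0 < s → (¬ ∃ a : K, a ∉ Oring D ∧ D a / a ≤ s) →
      ∃ a : K, a ∉ Oring D ∧ sig D s ≤ omg D (-(D (D a / a) / (D a / a))) := by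
  intro s hs hH
  have hmul := hK.leibniz
  have hadd := hK.map_add
  have hD0 : D 0 = 0 := auxD0 D hmul
  have hD1 : D 1 = 0 := auxD1 D hmul
  have hneg : ∀ x : K, D (-x) = -D x := auxDneg D hadd hmul
  have hsub : ∀ x y : K, D (x - y) = D x - D y := by
    intro x y
    rw [sub_eq_add_neg, hadd, hneg]
    ring
  have hcinv : ∀ c : K, c ≠ 0 → D c = 0 → D c⁻¹ = 0 := by
    intro c hc hDc
    have h := hmul c c⁻¹
    rw [mul_inv_cancel₀ hc, hD1, hDc] at h
    have h2 : c * D c⁻¹ = 0 := by linarith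
    rcases mul_eq_zero.mp h2 with h3 | h3
    · exact absurd h3 hc
    · exact h3
  have hcmul : ∀ c c' : K, D c = 0 → D c' = 0 → D (c * c') = 0 := by
    intro c c' h h'
    rw [hmul, h, h']; ring
  have hD2 : D (2:K) = 0 := by have h := hadd 1 1; norm_num [hD1] at h; exact h
  have hD4 : D (4:K) = 0 := by have h := hmul 2 2; norm_num [hD2] at h; exact h
  have hD8 : D (8:K) = 0 := by have h := hmul 2 4; norm_num [hD2, hD4] at h; exact h
  have hD16 : D (16:K) = 0 := by have h := hmul 4 4; norm_num [hD4] at h; exact h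
  -- Step A : get ε
  obtain ⟨g0, hg1, hg2⟩ := hai s (ne_of_gt hs)
  obtain ⟨c, hcD, hcle⟩ := hg1
  obtain ⟨c', hc'D, hc'le⟩ := hg2
  have hsabs : |s| = s := abs_of_pos hs
  have hDg0ne : D g0 ≠ 0 := by
    intro h
    rw [h] at hc'le
    simp at hc'le
    linarith [hsabs ▸ hc'le]
  have habsDg0 : 0 < |D g0| := abs_pos.mpr hDg0ne
  have hcpos : 0 < c := by
    rcases le_or_gt c 0 with h | h
    · exfalso
      have h2 : c * |s| ≤ 0 := mul_nonpos_iff.mpr (Or.inr ⟨h, abs_nonneg s⟩)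
      linarith
    · exact h
  have hc'pos : 0 < c' := by
    rcases le_or_gt c' 0 with h | h
    · exfalso
      have h2 : c' * |D g0| ≤ 0 := mul_nonpos_iff.mpr (Or.inr ⟨h, abs_nonneg _⟩)
      linarith [hsabs ▸ hc'le]
    · exact h
  have hg0O : g0 ∈ Oring D := by
    by_contra hno
    have hlt : s < D g0 / g0 := by
      rcases lt_or_ge s (D g0 / g0) with h | h
      · exact h
      · exact absurd ⟨g0, hno, h⟩ hH
    have hgbig : c < |g0| := by
      by_contra hle
      push_neg at hle
      exact hno ⟨c, hcD, hle⟩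
    have hg0pos : 0 < |g0| := lt_trans hcpos hgbig
    have h1 : |D g0 / g0| < s := by
      rw [abs_div, div_lt_iff₀ hg0pos]
      calc |D g0| ≤ c * s := by rwa [hsabs] at hcle
        _ < s * |g0| := by
            have := mul_lt_mul_of_pos_left hgbig hs
            linarith
    linarith [le_abs_self (D g0 / g0)]
  obtain ⟨c0, hc0D, hc0o⟩ := hK.res_const g0 hg0O
  have hDδ : D (g0 - c0) = D g0 := by rw [hsub, hc0D]; ring
  have hDδne : D (g0 - c0) ≠ 0 := by rw [hDδ]; exact hDg0ne
  obtain ⟨ε, hεpos, hεo, hεabs⟩ :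
      ∃ ε : K, 0 < ε ∧ ε ∈ oideal D ∧ |D ε| = |D g0| := by
    rcases lt_trichotomy (g0 - c0) 0 with h | h | h
    · refine ⟨-(g0 - c0), by linarith, ?_, by rw [hneg, abs_neg, hDδ]⟩
      intro kk hkk hkk'
      rw [abs_neg]
      exact hc0o kk hkk hkk'
    · exact absurd (by rw [h, hD0]) hDδne
    · exact ⟨g0 - c0, h, hc0o, by rw [hDδ]⟩
  have hεne : ε ≠ 0 := ne_of_gt hεpos
  have hεo' : ∀ c : K, D c = 0 → 0 < c → |ε| < c := hεo
  -- 1/ε is above all constants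
  have hinvbig : ∀ k : K, D k = 0 → k < 1 / ε := by
    intro k hk
    rcases le_or_gt k 0 with h | h
    · have : (0:K) < 1 / ε := by positivity
      linarith
    · have h1 : |ε| < k⁻¹ := hεo' k⁻¹ (hcinv k (ne_of_gt h) hk) (by positivity)
      rw [abs_of_pos hεpos] at h1
      rw [lt_div_iff₀ hεpos]
      have h2 := mul_lt_mul_of_pos_left h1 h
      rw [mul_inv_cancel₀ (ne_of_gt h)] at h2
      linarith
  have hDinvε : D (1 / ε) = -D ε / ε ^ 2 := by
    rw [auxDdiv D hmul 1 ε hεne, hD1]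
    ring
  have hDinvpos : 0 < D (1 / ε) := hK.deriv_pos _ hinvbig
  have hDεneg : D ε < 0 := by
    rw [hDinvε] at hDinvpos
    have h2 : (0:K) < ε ^ 2 := by positivity
    have h3 := mul_pos hDinvpos h2
    rw [div_mul_cancel₀ _ (ne_of_gt h2)] at h3
    linarith
  have hDεne : D ε ≠ 0 := ne_of_lt hDεneg
  obtain ⟨u, hudef⟩ : ∃ x : K, x = -D ε / ε := ⟨_, rfl⟩
  have hupos : 0 < u := by
    rw [hudef]
    exact div_pos (by linarith) hεpos
  have hune : u ≠ 0 := ne_of_gt hupos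
  have hgdag : D (1 / ε) / (1 / ε) = u := by
    rw [hDinvε, hudef]
    field_simp
  have hεabs' : |D ε| = -D ε := abs_of_neg hDεneg
  have hsle : s ≤ c' * (-D ε) := by
    rw [hsabs, ← hεabs, hεabs'] at hc'le
    exact hc'le
  have hDεle : -D ε ≤ c * s := by
    rw [hsabs, ← hεabs, hεabs'] at hcle
    exact hcle
  have hubig : ∀ k : K, D k = 0 → 0 < k → k * s < u := by
    intro k hk hkpos
    have h2 : k * c' < 1 / ε := hinvbig (k * c') (hcmul _ _ hk hc'D)
    have t1 : k * s ≤ (k * c') * (-D ε) := by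
      have := mul_le_mul_of_nonneg_left hsle (le_of_lt hkpos)
      linarith
    have t2 : (k * c') * (-D ε) < (1 / ε) * (-D ε) :=
      mul_lt_mul_of_pos_right h2 (by linarith)
    have hu2 : u = (1 / ε) * (-D ε) := by rw [hudef]; ring
    rw [hu2]
    linarith
  -- Step C : θ
  obtain ⟨θ, hθdef⟩ : ∃ x : K, x = -D ε / s := ⟨_, rfl⟩
  have hθlb : 1 / c' ≤ θ := by
    rw [hθdef, le_div_iff₀ hs, div_mul_eq_mul_div, one_mul, div_le_iff₀ hc'pos]
    linarith
  have hθub : θ ≤ c := by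
    rw [hθdef, div_le_iff₀ hs]
    linarith
  have hθpos : 0 < θ := lt_of_lt_of_le (by positivity) hθlb
  have hθne : θ ≠ 0 := ne_of_gt hθpos
  have hθO : θ ∈ Oring D := ⟨c, hcD, by rw [abs_of_pos hθpos]; exact hθub⟩
  obtain ⟨cθ, hcθD, hθo⟩ := hK.res_const θ hθO
  have hDθeq : D θ = D (θ - cθ) := by rw [hsub, hcθD]; ring
  have hc'ne : c' ≠ 0 := ne_of_gt hc'pos
  -- bounds on D θ
  have hDθbound : ∀ k : K, D k = 0 → 0 < k → |D θ| < k * u := by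
    intro k hk hkp
    have h := lemA hK hinvbig hθo hk hkp
    rw [hgdag] at h
    rw [hDθeq]
    exact h
  have hhb : ∀ k : K, D k = 0 → 0 < k → |D θ / θ| < k * u := by
    intro k hk hkp
    have hb := hDθbound (k * (1 / c'))
      (by rw [one_div]; exact hcmul _ _ hk (hcinv c' hc'ne hc'D)) (by positivity)
    rw [abs_div, abs_of_pos hθpos, div_lt_iff₀ hθpos]
    have h2 := mul_le_mul_of_nonneg_left hθlb (le_of_lt (mul_pos hkp hupos))
    linarith
  obtain ⟨β, hβdef⟩ : ∃ x : K, x = D θ / θ / u := ⟨_, rfl⟩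
  have hβo : β ∈ oideal D := by
    intro k hk hkp
    have h := hhb k hk hkp
    rw [hβdef, abs_div, abs_of_pos hupos, div_lt_iff₀ hupos]
    exact h
  have hDβ : |D β| < (16:K)⁻¹ * u := by
    have h16 : D ((16:K)⁻¹) = 0 := hcinv 16 (by norm_num) hD16
    have h := lemA hK hinvbig hβo h16 (by norm_num)
    rwa [hgdag] at h
  -- identities
  have huε : u * ε = θ * s := by
    rw [hudef, hθdef]
    field_simp
  have hlin := congrArg D huε
  rw [hmul u ε, hmul θ s] at hlin
  have hDεu : D ε = -(u * ε) := by rw [hudef]; field_simp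
  have hcross : D u * (θ * s) = (D θ * s + θ * D s + u * (θ * s)) * u := by
    linear_combination u * hlin - u ^ 2 * hDεu - (D u - u ^ 2) * huε
  have hId1 : D u / u = D θ / θ + D s / s + u := by
    rw [div_add_div _ _ hθne (ne_of_gt hs), div_add' _ _ _ (mul_ne_zero hθne (ne_of_gt hs)),
      div_eq_div_iff hune (mul_ne_zero hθne (ne_of_gt hs))]
    linear_combination hcross
  have hId2 : D (D u / u) = D (D θ / θ) + D (D s / s) + D u := by
    rw [hId1, hadd, hadd]
  have hDβq : D β = (D (D θ / θ) * u - D θ / θ * D u) / u ^ 2 := by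
    rw [hβdef]
    exact auxDdiv D hmul (D θ / θ) u hune
  have hA : D (D θ / θ) = u * D β + D θ / θ * (D u / u) := by
    rw [hDβq]
    field_simp
    ring
  have hDu' : D u = (D θ / θ + D s / s + u) * u := by
    rw [← hId1, div_mul_cancel₀ _ hune]
  -- conclusion
  refine ⟨1 / ε, ?_, ?_⟩
  · rintro ⟨k, hkD, hkle⟩
    have h1 : (0:K) < 1 / ε := by positivity
    rw [abs_of_pos h1] at hkle
    exact absurd hkle (not_le.mpr (hinvbig k hkD))
  · rw [hgdag]
    have e_s : D (-(D s / s)) = -D (D s / s) := hneg _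
    have e_u : D (-(D u / u)) = -D (D u / u) := hneg _
    have key : omg D (-(D u / u)) - sig D s
        = 2 * (u * D β) + (u + D θ / θ) ^ 2 - s ^ 2 := by
      simp only [omg, sig]
      rw [e_s, e_u, hId2, hA, hId1, hDu']
      ring
    have hb3 : s < u / 8 := by
      have := hubig 8 hD8 (by norm_num)
      linarith
    have hb2 := hhb (1/2) (by rw [one_div]; exact hcinv 2 two_ne_zero hD2) (by norm_num)
    have hb2a : -(1 / 2 * u) < D θ / θ := (abs_lt.mp hb2).1
    have hb1a : -(16⁻¹ * u) < D β := (abs_lt.mp hDβ).1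
    have hE := numlem hupos hs hb1a hb2a hb3
    linarith [key, hE]
end

section
/- Let K be an H-field with O ≠ K having 2-DIVP. Then K = ω(K) ∪ σ(K^>): for every f ∈ K, either f = −2z′ − z² for some z ∈ K, or f = ω(−y†) + y² for some y ∈ K with y > 0. -/
open MvPolynomial

private lemma jet_eq {K : Type*} [Field K] [LinearOrder K] [IsStrictOrderedRing K] (D : K → K) (y : K) :
    (fun i : Fin 3 => D^[(i : ℕ)] y) = ![y, D y, D (D y)] := by
  funext i; fin_cases i <;> rfl

private lemma eval_omegaP {K : Type*} [Field K] [LinearOrder K] [IsStrictOrderedRing K] (D : K → K) (f y : K) :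
    MvPolynomial.eval (fun i : Fin 3 => D^[(i : ℕ)] y)
      (C (-2) * X 1 - X 0 ^ 2 - C f : MvPolynomial (Fin 3) K)
      = -2 * D y - y ^ 2 - f := by
  rw [jet_eq]; simp

private lemma eval_omegaN {K : Type*} [Field K] [LinearOrder K] [IsStrictOrderedRing K] (D : K → K) (f y : K) :
    MvPolynomial.eval (fun i : Fin 3 => D^[(i : ℕ)] y)
      (C 2 * X 1 + X 0 ^ 2 + C f : MvPolynomial (Fin 3) K)
      = 2 * D y + y ^ 2 + f := by
  rw [jet_eq]; simp

private lemma eval_sq {K : Type*} [Field K] [LinearOrder K] [IsStrictOrderedRing K] (D : K → K) (f y : K) :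
    MvPolynomial.eval (fun i : Fin 3 => D^[(i : ℕ)] y)
      (X 0 ^ 2 - C f : MvPolynomial (Fin 3) K) = y ^ 2 - f := by
  rw [jet_eq]; simp

private lemma eval_sigP {K : Type*} [Field K] [LinearOrder K] [IsStrictOrderedRing K] (D : K → K) (f y : K) :
    MvPolynomial.eval (fun i : Fin 3 => D^[(i : ℕ)] y)
      (C 2 * X 0 * X 2 - C 3 * X 1 ^ 2 + X 0 ^ 4 - C f * X 0 ^ 2 : MvPolynomial (Fin 3) K)
      = 2 * y * D (D y) - 3 * D y ^ 2 + y ^ 4 - f * y ^ 2 := by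
  rw [jet_eq]; simp

private lemma eval_sigN {K : Type*} [Field K] [LinearOrder K] [IsStrictOrderedRing K] (D : K → K) (f y : K) :
    MvPolynomial.eval (fun i : Fin 3 => D^[(i : ℕ)] y)
      (-(C 2 * X 0 * X 2 - C 3 * X 1 ^ 2 + X 0 ^ 4 - C f * X 0 ^ 2) : MvPolynomial (Fin 3) K)
      = -(2 * y * D (D y) - 3 * D y ^ 2 + y ^ 4 - f * y ^ 2) := by
  rw [jet_eq]; simp

set_option maxHeartbeats 2000000 in
theorem stmt10 {K : Type*} [Field K] [LinearOrder K] [IsStrictOrderedRing K] (D : K → K)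
    (hK : IsHField D) (hnt : ∃ f : K, f ∉ Oring D) (hdivp : DIVPat D 2) :
    ∀ f : K, (∃ z : K, f = -2 * D z - z ^ 2) ∨
      (∃ y : K, 0 < y ∧ f = omg D (-(D y / y)) + y ^ 2) := by
  classical
  obtain ⟨x0, hx0⟩ := hnt
  obtain ⟨hadd, hmul, hposD, _hres⟩ := hK
  intro f
  -- basic derivation facts
  have hD0 : D 0 = 0 := by
    have h := hadd 0 0
    have e : (0 : K) + 0 = 0 := by ring
    rw [e] at h; linarith
  have hDneg : ∀ a : K, D (-a) = -D a := by
    intro a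
    have h := hadd a (-a)
    have e : a + -a = 0 := by ring
    rw [e, hD0] at h; linarith
  have hD1 : D 1 = 0 := by
    have h := hmul 1 1
    have e : (1 : K) * 1 = 1 := by ring
    rw [e] at h; linarith [h]
  have hDnat : ∀ n : ℕ, D ((n : ℕ) : K) = 0 := by
    intro n
    induction n with
    | zero => simpa using hD0
    | succ n ih =>
      push_cast
      rw [hadd, ih, hD1, add_zero]
  have hD4 : D (4 : K) = 0 := by simpa using hDnat 4
  have hD8 : D (8 : K) = 0 := by simpa using hDnat 8
  have hD64 : D (64 : K) = 0 := by simpa using hDnat 64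
  have hDq : D ((4 : K)⁻¹) = 0 := by
    have h := hmul 4 (4⁻¹ : K)
    rw [mul_inv_cancel₀ (by norm_num : (4 : K) ≠ 0), hD1, hD4] at h
    have : (0:K) = 4 * D (4⁻¹:K) := by linarith
    linarith
  have hquot : ∀ u v : K, v ≠ 0 → D (u / v) = (v * D u - u * D v) / v ^ 2 := by
    intro u v hv
    have h1 : u / v * v = u := div_mul_cancel₀ u hv
    have h2 := hmul (u / v) v
    rw [h1] at h2
    have h3 : v * D (u / v) = D u - u / v * D v := by linarith
    have h4 : v ^ 2 * D (u / v) = v * D u - u * D v := by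
      calc v ^ 2 * D (u / v) = v * (v * D (u / v)) := by ring
        _ = v * (D u - u / v * D v) := by rw [h3]
        _ = v * D u - u / v * v * D v := by ring
        _ = v * D u - u * D v := by rw [h1]
    rw [eq_div_iff (pow_ne_zero 2 hv)]
    linarith
  have homgneg : ∀ w : K, omg D (-w) = 2 * D w - w ^ 2 := by
    intro w
    show -2 * D (-w) - (-w) ^ 2 = _
    rw [hDneg]; ring
  -- the key rewriting of the sigma polynomial
  have hsig : ∀ y : K, y ≠ 0 →
      2 * y * D (D y) - 3 * D y ^ 2 + y ^ 4 - f * y ^ 2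
        = y ^ 2 * (omg D (-(D y / y)) + y ^ 2 - f) := by
    intro y hy
    rw [homgneg (D y / y), hquot (D y) y hy]
    field_simp
    ring
  -- element above all constants
  have hxlarge : ∀ c : K, D c = 0 → c < |x0| := by
    intro c hc
    by_contra hle
    push_neg at hle
    exact hx0 ⟨c, hc, hle⟩
  set z1 : K := |x0| + (|f| + 1) with hz1def
  have hz1C : ∀ c : K, D c = 0 → c < z1 := by
    intro c hc
    have h1 := hxlarge c hc
    have h2 : (0 : K) < |f| + 1 := by positivity
    rw [hz1def]; linarith
  have hz1d : 0 < D z1 := hposD z1 hz1C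
  have hz1ge : |f| + 1 ≤ z1 := by
    rw [hz1def]; nlinarith [abs_nonneg x0]
  have hwz1 : -2 * D z1 - z1 ^ 2 < f := by
    nlinarith [hz1d, hz1ge, neg_abs_le f, abs_nonneg f, sq_nonneg (z1 - 1)]
  by_cases homega : ∃ z : K, f = -2 * D z - z ^ 2
  · exact Or.inl homega
  -- Case A : all omega values are < f
  have caseA : ∀ z : K, -2 * D z - z ^ 2 < f := by
    intro z
    rcases lt_trichotomy (-2 * D z - z ^ 2) f with h | h | h
    · exact h
    · exact absurd ⟨z, h.symm⟩ homega
    · exfalso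
      rcases lt_trichotomy z1 z with hlt | heq | hgt
      · obtain ⟨y, -, -, hy⟩ := hdivp (C (-2) * X 1 - X 0 ^ 2 - C f) z1 z hlt
          (by show MvPolynomial.eval (fun i : Fin 3 => D^[(i : ℕ)] z1) _ < 0
              rw [eval_omegaP]; linarith)
          (by show 0 < MvPolynomial.eval (fun i : Fin 3 => D^[(i : ℕ)] z) _
              rw [eval_omegaP]; linarith)
        have hy' : -2 * D y - y ^ 2 - f = 0 := by
          rw [← eval_omegaP D f y]; exact hy
        exact homega ⟨y, by linarith⟩
      · rw [heq] at hwz1; linarith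
      · obtain ⟨y, -, -, hy⟩ := hdivp (C 2 * X 1 + X 0 ^ 2 + C f) z z1 hgt
          (by show MvPolynomial.eval (fun i : Fin 3 => D^[(i : ℕ)] z) _ < 0
              rw [eval_omegaN]; linarith)
          (by show 0 < MvPolynomial.eval (fun i : Fin 3 => D^[(i : ℕ)] z1) _
              rw [eval_omegaN]; linarith)
        have hy' : 2 * D y + y ^ 2 + f = 0 := by
          rw [← eval_omegaN D f y]; exact hy
        exact homega ⟨y, by linarith⟩
  have hf0 : 0 < f := by
    have h := caseA 0
    rw [hD0] at h
    nlinarith [h]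
  -- square root of f
  obtain ⟨s, hs_pos, -, hs_eq⟩ := hdivp (X 0 ^ 2 - C f) 0 (f + 1) (by linarith)
    (by show MvPolynomial.eval (fun i : Fin 3 => D^[(i : ℕ)] (0:K)) _ < 0
        rw [eval_sq]; nlinarith)
    (by show 0 < MvPolynomial.eval (fun i : Fin 3 => D^[(i : ℕ)] (f + 1)) _
        rw [eval_sq]; nlinarith)
  have hs2 : s ^ 2 = f := by
    have h : s ^ 2 - f = 0 := by rw [← eval_sq D f s]; exact hs_eq
    linarith
  have hsne : s ≠ 0 := ne_of_gt hs_pos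
  have hDs_lb : -f < D s := by
    have h := caseA s
    rw [hs2] at h; linarith
  have hDs_ub : D s < f := by
    have h := caseA (-s)
    rw [hDneg] at h
    have e : (-s) ^ 2 = f := by rw [neg_pow]; simp [hs2]
    nlinarith [h, hs2]
  set p : K := D s / s with hpdef
  have hps : p * s = D s := by rw [hpdef]; exact div_mul_cancel₀ _ hsne
  have hp2 : p ^ 2 < f := by
    have h1 : p ^ 2 * f = D s ^ 2 := by rw [← hs2, ← hps]; ring
    have h2 : 0 < (f - D s) * (f + D s) := mul_pos (by linarith) (by linarith)
    nlinarith [h1, h2, hf0]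
  have hDp_lb : -f < D p := by
    have h := caseA p
    linarith [hp2]
  -- (E2): sigma(2s) > f
  have hD2s : D (2 * s) = 2 * D s := by
    have h := hadd s s
    rw [two_mul, h]; ring
  have hrat2s : D (2 * s) / (2 * s) = p := by
    rw [hD2s, hpdef]
    rw [mul_div_mul_left _ _ (two_ne_zero)]
  have hE2 : f < omg D (-(D (2 * s) / (2 * s))) + (2 * s) ^ 2 := by
    rw [hrat2s, homgneg]
    have e : (2 * s) ^ 2 = 4 * f := by rw [mul_pow, hs2]; norm_num
    rw [e]
    linarith [hDp_lb, hp2]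
  by_cases hE1 : ∃ y : K, 0 < y ∧ omg D (-(D y / y)) + y ^ 2 ≤ f
  · -- we have both endpoints: finish by DIVP on the sigma polynomial
    obtain ⟨y1, hy1, hy1le⟩ := hE1
    rcases eq_or_lt_of_le hy1le with heq | hlt
    · exact Or.inr ⟨y1, hy1, heq.symm⟩
    have hb : 0 < 2 * s := by linarith
    rcases lt_trichotomy y1 (2 * s) with hord | hord | hord
    · obtain ⟨y, hya, -, hy⟩ := hdivp
        (C 2 * X 0 * X 2 - C 3 * X 1 ^ 2 + X 0 ^ 4 - C f * X 0 ^ 2) y1 (2 * s) hord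
        (by show MvPolynomial.eval (fun i : Fin 3 => D^[(i : ℕ)] y1) _ < 0
            rw [eval_sigP, hsig y1 (ne_of_gt hy1)]
            exact mul_neg_of_pos_of_neg (pow_pos hy1 2) (by linarith))
        (by show 0 < MvPolynomial.eval (fun i : Fin 3 => D^[(i : ℕ)] (2 * s)) _
            rw [eval_sigP, hsig (2 * s) (ne_of_gt hb)]
            exact mul_pos (pow_pos hb 2) (by linarith))
      have hy0 : 0 < y := lt_trans hy1 hya
      have hy' : y ^ 2 * (omg D (-(D y / y)) + y ^ 2 - f) = 0 := by
        rw [← hsig y (ne_of_gt hy0), ← eval_sigP D f y]; exact hy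
      rcases mul_eq_zero.mp hy' with h | h
      · exact absurd h (by positivity)
      · exact Or.inr ⟨y, hy0, by linarith⟩
    · exfalso; rw [hord] at hlt; linarith [hE2]
    · obtain ⟨y, hya, -, hy⟩ := hdivp
        (-(C 2 * X 0 * X 2 - C 3 * X 1 ^ 2 + X 0 ^ 4 - C f * X 0 ^ 2)) (2 * s) y1 hord
        (by show MvPolynomial.eval (fun i : Fin 3 => D^[(i : ℕ)] (2 * s)) _ < 0
            rw [eval_sigN, hsig (2 * s) (ne_of_gt hb)]
            have := mul_pos (pow_pos hb 2)
              (show (0:K) < omg D (-(D (2*s) / (2*s))) + (2*s) ^ 2 - f by linarith)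
            linarith)
        (by show 0 < MvPolynomial.eval (fun i : Fin 3 => D^[(i : ℕ)] y1) _
            rw [eval_sigN, hsig y1 (ne_of_gt hy1)]
            have := mul_neg_of_pos_of_neg (pow_pos hy1 2)
              (show omg D (-(D y1 / y1)) + y1 ^ 2 - f < 0 by linarith)
            linarith)
      have hy0 : 0 < y := lt_trans hb hya
      have hy' : y ^ 2 * (omg D (-(D y / y)) + y ^ 2 - f) = 0 := by
        have h2 : -(2 * y * D (D y) - 3 * D y ^ 2 + y ^ 4 - f * y ^ 2) = 0 := by
          rw [← eval_sigN D f y]; exact hy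
        rw [← hsig y (ne_of_gt hy0)]; linarith
      rcases mul_eq_zero.mp hy' with h | h
      · exact absurd h (by positivity)
      · exact Or.inr ⟨y, hy0, by linarith⟩
  · -- bad case: sigma(y) > f for all y > 0 : derive a contradiction
    exfalso
    have hbad : ∀ y : K, 0 < y → f < omg D (-(D y / y)) + y ^ 2 := by
      intro y hy
      rcases lt_or_ge f (omg D (-(D y / y)) + y ^ 2) with h | h
      · exact h
      · exact absurd ⟨y, hy, h⟩ hE1
    have hf1 : f < 1 := by
      have h := hbad 1 one_pos
      simp [omg, hD1, hD0] at h
      linarith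
    have hcaseAp : 2 * D p - p ^ 2 < f := by
      have h := caseA (-p)
      rw [hDneg] at h
      have e : (-p) ^ 2 = p ^ 2 := by ring
      rw [e] at h; linarith
    -- from sigma(s/4) > f : f - omega(-p) < f/16
    have hDs4 : D (s / 4) = D s / 4 := by
      rw [div_eq_mul_inv, hmul s (4⁻¹ : K), hDq]
      ring
    have hrat4 : D (s / 4) / (s / 4) = p := by
      rw [hDs4, hpdef, div_div_div_comm]
      norm_num
    have hG16 : f < 2 * D p - p ^ 2 + f / 16 := by
      have h := hbad (s / 4) (by linarith)
      rw [hrat4, homgneg] at h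
      have e : (s / 4) ^ 2 = f / 16 := by rw [div_pow, hs2]; norm_num
      rw [e] at h
      exact h
    -- from sigma(s^64) > f : p^2 < f/63
    have hDpow : ∀ n : ℕ, D (s ^ (n + 1)) = ((n : K) + 1) * s ^ n * D s := by
      intro n
      induction n with
      | zero => simp
      | succ m ih =>
        have h := hmul (s ^ (m + 1)) s
        rw [← pow_succ] at h
        rw [h, ih]
        push_cast
        ring
    have hD64pow : D (s ^ 64) = 64 * s ^ 63 * D s := by
      have h := hDpow 63
      norm_num at h
      exact h
    have hrat64 : D (s ^ 64) / s ^ 64 = 64 * p := by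
      have e : s ^ 64 = s ^ 63 * s := by rw [← pow_succ]
      rw [hD64pow, hpdef, e]
      field_simp
    have hD64p : D (64 * p) = 64 * D p := by
      rw [hmul 64 p, hD64]; ring
    have h64 : f < 128 * D p - 4096 * p ^ 2 + f ^ 64 := by
      have h := hbad (s ^ 64) (pow_pos hs_pos 64)
      rw [hrat64, homgneg, hD64p] at h
      have e1 : (s ^ 64) ^ 2 = f ^ 64 := by
        rw [← hs2, ← pow_mul, ← pow_mul]
      have e2 : (64 * p) ^ 2 = 4096 * p ^ 2 := by ring
      rw [e1, e2] at h
      linarith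
    have hf64 : f ^ 64 ≤ f := by
      apply pow_le_of_le_one (le_of_lt hf0) (le_of_lt hf1)
      norm_num
    have hp63 : p ^ 2 < f / 63 := by linarith [h64, hcaseAp, hf64]
    -- caseA at -(8p) finishes
    have hD8p : D (8 * p) = 8 * D p := by
      rw [hmul 8 p, hD8]; ring
    have h8 := caseA (-(8 * p))
    rw [hDneg, hD8p] at h8
    have e : (-(8 * p)) ^ 2 = 64 * p ^ 2 := by ring
    rw [e] at h8
    linarith [hG16, h8, hp63, hf0]
end

section
/- Let K be an H-field with O ≠ K having 2-DIVP. Then K = ω(Λ(K))^↓ ∪ σ(Γ(K))^↑: for every f ∈ K, either f ≤ ω(−(a†)†) for some a ∈ K ∖ O, or σ(a†) ≤ f for some a ∈ K ∖ O (here a† ≠ 0 for a ∈ K ∖ O, so these expressions are defined). -/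
namespace Stmt11aux

variable {K : Type*} [Field K] [LinearOrder K] [IsStrictOrderedRing K] {D : K → K}

lemma HD0 (hK : IsHField D) : D 0 = 0 := by
  have h := hK.map_add 0 0; simp only [add_zero] at h; linarith

lemma HD1 (hK : IsHField D) : D 1 = 0 := by
  have h := hK.leibniz 1 1; simp only [one_mul] at h; linarith

lemma HDneg (hK : IsHField D) (a : K) : D (-a) = -D a := by
  have h := hK.map_add a (-a)
  rw [add_neg_cancel, HD0 hK] at h; linarith

lemma HDsub (hK : IsHField D) (a b : K) : D (a - b) = D a - D b := by
  have h := hK.map_add b (a - b)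
  rw [add_sub_cancel] at h; linarith

lemma HDinv (hK : IsHField D) {g : K} (hg : g ≠ 0) : D g⁻¹ = -D g / g ^ 2 := by
  have h := hK.leibniz g g⁻¹
  rw [mul_inv_cancel₀ hg, HD1 hK] at h
  have hg2 : g ^ 2 ≠ 0 := pow_ne_zero _ hg
  have h3 : g * (g * D g⁻¹ + g⁻¹ * D g) = 0 := by rw [← h]; ring
  have h4 : g * g⁻¹ = 1 := mul_inv_cancel₀ hg
  rw [eq_div_iff hg2]
  linear_combination h3 - D g * h4

lemma HDdiv (hK : IsHField D) (f : K) {g : K} (hg : g ≠ 0) :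
    D (f / g) = (g * D f - f * D g) / g ^ 2 := by
  rw [div_eq_mul_inv, hK.leibniz f g⁻¹, HDinv hK hg]
  field_simp
  ring

lemma HDsq (hK : IsHField D) (u : K) : D (u ^ 2) = 2 * u * D u := by
  rw [pow_two, hK.leibniz]; ring

lemma HD2 (hK : IsHField D) : D 2 = 0 := by
  have h := hK.map_add 1 1
  rw [HD1 hK] at h; norm_num at h; exact h

lemma HD4 (hK : IsHField D) : D 4 = 0 := by
  have h := hK.leibniz 2 2
  rw [HD2 hK] at h; norm_num at h; exact h

lemma HDhalf (hK : IsHField D) : D (2⁻¹ : K) = 0 := by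
  rw [HDinv hK (two_ne_zero), HD2 hK]; simp

lemma HDquarter (hK : IsHField D) {c : K} (hc : D c = 0) : D (c / 4) = 0 := by
  rw [HDdiv hK c (by norm_num : (4:K) ≠ 0), HD4 hK, hc]; simp

lemma not_O_gt {x : K} (hx : x ∉ Oring D) (hxpos : 0 < x) {c : K} (hc : D c = 0) : c < x := by
  by_contra h
  push_neg at h
  exact hx ⟨c, hc, by rwa [abs_of_pos hxpos]⟩

lemma abs_not_O {x : K} (hx : x ∉ Oring D) : |x| ∉ Oring D := by
  rintro ⟨c, hc, h⟩
  exact hx ⟨c, hc, by rwa [abs_abs] at h⟩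

lemma ne_zero_of_not_O (hK : IsHField D) {x : K} (hx : x ∉ Oring D) : x ≠ 0 := by
  rintro rfl
  exact hx ⟨0, HD0 hK, by simp⟩

lemma inv_not_O (hK : IsHField D) {d : K} (hd : d ≠ 0)
    (hsm : ∀ c, D c = 0 → 0 < c → |d| < c) : d⁻¹ ∉ Oring D := by
  rintro ⟨c, hc, h⟩
  have hdpos : 0 < |d| := abs_pos.mpr hd
  have hc0 : 0 < c := lt_of_lt_of_le (abs_pos.mpr (inv_ne_zero hd)) h
  have hcinv : D c⁻¹ = 0 := by rw [HDinv hK (ne_of_gt hc0), hc]; simp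
  have h2 := hsm c⁻¹ hcinv (by positivity)
  rw [abs_inv] at h
  have hA : c * |d| < 1 := by
    have := mul_lt_mul_of_pos_left h2 hc0
    rwa [mul_inv_cancel₀ (ne_of_gt hc0)] at this
  have hB : (1 : K) ≤ c * |d| := by
    have := mul_le_mul_of_nonneg_right h hdpos.le
    rw [inv_mul_cancel₀ (ne_of_gt hdpos)] at this
    linarith [this, mul_comm c |d|]
  linarith

set_option maxHeartbeats 2000000 in
lemma key (hK : IsHField D) {c d : K} (hc : D c = 0) (hd : d ≠ 0) (hp : D d ≠ 0)
    (hsm : |d| ≤ c / 4) :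
    sig D (D (c + d) / (c + d)) ≤ omg D (-(D (D d / d) / (D d / d))) := by
  have habs := abs_le.mp hsm
  have hdabs : 0 < |d| := abs_pos.mpr hd
  have hc0 : 0 < c := by linarith
  have ha0 : 0 < c + d := by linarith [habs.1]
  have ha : c + d ≠ 0 := ne_of_gt ha0
  have hDa : D (c + d) = D d := by rw [hK.map_add, hc, zero_add]
  have hap : (c + d) * D d ≠ 0 := mul_ne_zero ha hp
  have hdp : d * D d ≠ 0 := mul_ne_zero hd hp
  have hT1 : D (D (c + d) / (c + d)) / (D (c + d) / (c + d))
      = ((c + d) * D (D d) - (D d) ^ 2) / ((c + d) * D d) := by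
    rw [hDa, HDdiv hK (D d) ha, hDa]
    field_simp
  have hT2 : D (D d / d) / (D d / d) = (d * D (D d) - (D d) ^ 2) / (d * D d) := by
    rw [HDdiv hK (D d) hd]
    field_simp
  have hDT1 : D (((c + d) * D (D d) - (D d) ^ 2) / ((c + d) * D d))
      = (((c + d) * D d) * ((c + d) * D (D (D d)) + D (D d) * D d - 2 * D d * D (D d))
          - ((c + d) * D (D d) - (D d) ^ 2) * ((c + d) * D (D d) + (D d) ^ 2))
        / (((c + d) * D d) ^ 2) := by
    rw [HDdiv hK _ hap, HDsub hK, hK.leibniz (c + d) (D (D d)), HDsq hK,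
      hK.leibniz (c + d) (D d), hDa]
    ring
  have hDT2 : D ((d * D (D d) - (D d) ^ 2) / (d * D d))
      = ((d * D d) * (d * D (D (D d)) + D (D d) * D d - 2 * D d * D (D d))
          - (d * D (D d) - (D d) ^ 2) * (d * D (D d) + (D d) ^ 2))
        / ((d * D d) ^ 2) := by
    rw [HDdiv hK _ hdp, HDsub hK, hK.leibniz d (D (D d)), HDsq hK, hK.leibniz d (D d)]
    ring
  have hmain : omg D (-(D (D d / d) / (D d / d))) - sig D (D (c + d) / (c + d))
      = (D d / d) ^ 2 - 2 * (D d / (c + d)) ^ 2 := by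
    simp only [sig, omg]
    rw [hT1, hT2, hDa]
    simp only [HDneg hK]
    rw [hDT1, hDT2]
    field_simp
    ring
  have h9 : 9 * d ^ 2 ≤ (c + d) ^ 2 := by
    nlinarith [habs.1, habs.2, hc0,
      mul_nonneg (by linarith [habs.2] : (0:K) ≤ c / 4 - d) (by linarith [habs.1] : (0:K) ≤ c / 4 + d),
      mul_le_mul_of_nonneg_left habs.1 hc0.le]
  have hineq : 0 ≤ (D d / d) ^ 2 - 2 * (D d / (c + d)) ^ 2 := by
    have h1 : (D d / d) ^ 2 - 2 * (D d / (c + d)) ^ 2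
        = (D d) ^ 2 * ((c + d) ^ 2 - 2 * d ^ 2) / (d ^ 2 * (c + d) ^ 2) := by
      field_simp
    rw [h1]
    apply div_nonneg (mul_nonneg (sq_nonneg _) (by nlinarith [h9])) (by positivity)
  linarith


lemma sigid (hK : IsHField D) (f : K) {w : K} (hw : w ≠ 0) :
    2 * w * D (D w) - 3 * (D w) ^ 2 + w ^ 4 - f * w ^ 2 = w ^ 2 * (sig D w - f) := by
  simp only [sig, omg]
  simp only [HDneg hK]
  rw [HDdiv hK (D w) hw]
  field_simp
  ring

lemma evalS (D : K → K) (f w : K) :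
    MvPolynomial.eval (fun i : Fin (2+1) => D^[(i : ℕ)] w)
      (MvPolynomial.C 2 * MvPolynomial.X 0 * MvPolynomial.X 2 - MvPolynomial.C 3 * MvPolynomial.X 1 ^ 2
        + MvPolynomial.X 0 ^ 4 - MvPolynomial.C f * MvPolynomial.X 0 ^ 2)
    = 2 * w * D (D w) - 3 * (D w) ^ 2 + w ^ 4 - f * w ^ 2 := by
  simp [Function.iterate_succ_apply']

lemma evalP2 (D : K → K) (y w : K) :
    MvPolynomial.eval (fun i : Fin (2+1) => D^[(i : ℕ)] w)
      (MvPolynomial.X 1 - MvPolynomial.C y * MvPolynomial.X 0)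
    = D w - y * w := by
  simp [Function.iterate_succ_apply']

end Stmt11aux

open Stmt11aux in
set_option maxHeartbeats 2000000 in
theorem stmt11 {K : Type*} [Field K] [LinearOrder K] [IsStrictOrderedRing K] (D : K → K)
    (hK : IsHField D) (hnt : ∃ f : K, f ∉ Oring D) (hdivp : DIVPat D 2) :
    ∀ f : K, (∃ a : K, a ∉ Oring D ∧ f ≤ omg D (-(D (D a / a) / (D a / a)))) ∨
      (∃ a : K, a ∉ Oring D ∧ sig D (D a / a) ≤ f) := by
  classical
  obtain ⟨x₀, hx₀⟩ := hnt
  have hxO : |x₀| ∉ Oring D := abs_not_O hx₀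
  have hx₀ne : x₀ ≠ 0 := ne_zero_of_not_O hK hx₀
  set x : K := |x₀| with hxdef
  have hxpos : 0 < x := abs_pos.mpr hx₀ne
  have hxne : x ≠ 0 := ne_of_gt hxpos
  have hgt : ∀ c : K, D c = 0 → c < x := fun c hc => not_O_gt hxO hxpos hc
  have hx1 : (1:K) < x := hgt 1 (HD1 hK)
  have hx2 : (2:K) < x := hgt 2 (HD2 hK)
  have hx4 : (4:K) < x := hgt 4 (HD4 hK)
  have hx' : 0 < D x := hK.deriv_pos x hgt
  intro f
  by_contra hcon
  push_neg at hcon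
  obtain ⟨N1, N2⟩ := hcon
  have hγpos : 0 < D x / x := div_pos hx' hxpos
  have hγne : D x / x ≠ 0 := ne_of_gt hγpos
  have hN1x := N1 x hxO
  have hN2x := N2 x hxO
  -- first use of `key` with c = 1, d = -x⁻¹
  have hd1ne : -x⁻¹ ≠ 0 := by simp [hxne]
  have hDd1 : D (-x⁻¹) = D x / x ^ 2 := by rw [HDneg hK, HDinv hK hxne]; ring
  have hDd1ne : D (-x⁻¹) ≠ 0 := by rw [hDd1]; positivity
  have hsm1 : |(-x⁻¹ : K)| ≤ 1 / 4 := by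
    rw [abs_neg, abs_inv, abs_of_pos hxpos, inv_eq_one_div,
      div_le_div_iff₀ hxpos (by norm_num : (0:K) < 4)]
    linarith
  have hk1 := key hK (HD1 hK) hd1ne hDd1ne hsm1
  have hvv : D (-x⁻¹) / (-x⁻¹) = -(D x / x) := by
    rw [hDd1]
    field_simp
  rw [hvv, HDneg hK, neg_div_neg_eq] at hk1
  have hw1sig : sig D (D (1 + -x⁻¹) / (1 + -x⁻¹)) < f := lt_of_le_of_lt hk1 hN1x
  have hxinv1 : x⁻¹ < 1 := by
    rw [inv_eq_one_div, div_lt_iff₀ hxpos]; linarith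
  have hden : (0:K) < 1 + -x⁻¹ := by linarith
  have hDnum : D (1 + -x⁻¹) = D x / x ^ 2 := by rw [hK.map_add, HD1 hK, hDd1, zero_add]
  have hx2xpos : (0:K) < x ^ 2 - x := by nlinarith
  have hrew : x ^ 2 * (1 + -x⁻¹) = x ^ 2 - x := by field_simp; ring
  have hw1 : D (1 + -x⁻¹) / (1 + -x⁻¹) = D x / (x ^ 2 - x) := by
    rw [hDnum, div_div, hrew]
  have hw1pos : 0 < D (1 + -x⁻¹) / (1 + -x⁻¹) := by rw [hw1]; positivity
  have hw1ne : D (1 + -x⁻¹) / (1 + -x⁻¹) ≠ 0 := ne_of_gt hw1pos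
  have hw1lt : D (1 + -x⁻¹) / (1 + -x⁻¹) < D x / x := by
    rw [hw1, div_lt_div_iff₀ hx2xpos hxpos]
    have hq : (0:K) < x ^ 2 - 2 * x := by nlinarith
    nlinarith [mul_pos hx' hq]
  -- first DIVP application
  have hlow : MvPolynomial.eval (fun i : Fin (2+1) => D^[(i : ℕ)] (D (1 + -x⁻¹) / (1 + -x⁻¹)))
      (MvPolynomial.C 2 * MvPolynomial.X 0 * MvPolynomial.X 2 - MvPolynomial.C 3 * MvPolynomial.X 1 ^ 2
        + MvPolynomial.X 0 ^ 4 - MvPolynomial.C f * MvPolynomial.X 0 ^ 2) < 0 := by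
    rw [evalS, sigid hK f hw1ne]
    exact mul_neg_of_pos_of_neg (by positivity) (by linarith)
  have hhigh : 0 < MvPolynomial.eval (fun i : Fin (2+1) => D^[(i : ℕ)] (D x / x))
      (MvPolynomial.C 2 * MvPolynomial.X 0 * MvPolynomial.X 2 - MvPolynomial.C 3 * MvPolynomial.X 1 ^ 2
        + MvPolynomial.X 0 ^ 4 - MvPolynomial.C f * MvPolynomial.X 0 ^ 2) := by
    rw [evalS, sigid hK f hγne]
    exact mul_pos (by positivity) (by linarith)
  obtain ⟨y, hy1, hy2, hy0⟩ := hdivp _ _ _ hw1lt hlow hhigh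
  have hypos : 0 < y := lt_trans hw1pos hy1
  have hyne : y ≠ 0 := ne_of_gt hypos
  rw [evalS, sigid hK f hyne] at hy0
  have hsigy : sig D y = f := by
    rcases mul_eq_zero.mp hy0 with h | h
    · exact absurd h (pow_ne_zero 2 hyne)
    · linarith [sub_eq_zero.mp h]
  -- second DIVP application: solve D A = y * A with 1 < A < x^2
  have h1x2 : (1:K) < x ^ 2 := by nlinarith
  have hlow2 : MvPolynomial.eval (fun i : Fin (2+1) => D^[(i : ℕ)] (1:K))
      (MvPolynomial.X 1 - MvPolynomial.C y * MvPolynomial.X 0) < 0 := by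
    rw [evalP2, HD1 hK]
    linarith
  have hhigh2 : 0 < MvPolynomial.eval (fun i : Fin (2+1) => D^[(i : ℕ)] (x ^ 2))
      (MvPolynomial.X 1 - MvPolynomial.C y * MvPolynomial.X 0) := by
    rw [evalP2, HDsq hK]
    have hyx : y * x < D x := (lt_div_iff₀ hxpos).mp hy2
    nlinarith
  obtain ⟨A, hA1, hA2, hA0⟩ := hdivp _ _ _ h1x2 hlow2 hhigh2
  rw [evalP2] at hA0
  have hApos : 0 < A := lt_trans one_pos hA1
  have hAne : A ≠ 0 := ne_of_gt hApos
  have hDA : D A = y * A := by linarith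
  have hDAA : D A / A = y := by rw [hDA, mul_div_assoc, div_self hAne, mul_one]
  by_cases hAO : A ∈ Oring D
  · obtain ⟨c, hc, hmem⟩ := hK.res_const A hAO
    simp only [oideal, Set.mem_setOf_eq] at hmem
    have hDA0 : 0 < D A := by rw [hDA]; positivity
    have hdne : A - c ≠ 0 := by
      intro h
      have hAc : A = c := by linarith [sub_eq_zero.mp h]
      rw [hAc, hc] at hDA0
      exact lt_irrefl 0 hDA0
    have hDd : D (A - c) = D A := by rw [HDsub hK, hc, sub_zero]
    have hDdne : D (A - c) ≠ 0 := by rw [hDd]; exact ne_of_gt hDA0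
    have habs2 : |A - c| < 2⁻¹ := hmem 2⁻¹ (HDhalf hK) (by norm_num)
    have hcpos : 0 < c := by
      have h := abs_lt.mp habs2
      linarith
    have hsm2 : |A - c| ≤ c / 4 := le_of_lt (hmem (c/4) (HDquarter hK hc) (by positivity))
    have hkey := key hK hc hdne hDdne hsm2
    have hAc : c + (A - c) = A := by ring
    rw [hAc, hDAA, hsigy] at hkey
    have hinvO : (A - c)⁻¹ ∉ Oring D := inv_not_O hK hdne hmem
    have hN1d := N1 _ hinvO
    have hm : D ((A - c)⁻¹) / (A - c)⁻¹ = -(D (A - c) / (A - c)) := by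
      rw [HDinv hK hdne]
      field_simp
    rw [hm, HDneg hK, neg_div_neg_eq] at hN1d
    linarith
  · have hcontra := N2 A hAO
    rw [hDAA, hsigy] at hcontra
    exact lt_irrefl f hcontra
end
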